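/- arXiv:1607.05568 — 5 statements merged into one kernel-verified Lean document; each statement's English description precedes it below -/
import Mathlib

section
/- For every face F of the positive semidefinite cone S^n_+, the set S^n_+ + F^⊥ is closed, where F^⊥ = {Z ∈ S^n : Z • X = 0 for all X ∈ F}. -/
open Matrix Set

noncomputable section

abbrev Mat (n : ℕ) := Matrix (Fin n) (Fin n) ℝ

def ip {n : ℕ} (A B : Mat n) : ℝ := ∑ i, ∑ j, A i j * B i j

def psdCone (n : ℕ) : Set (Mat n) := {X | X.PosSemidef}

def IsFaceOf {n : ℕ} (C F : Set (Mat n)) : Prop :=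
  F ⊆ C ∧ Convex ℝ F ∧
    ∀ x₁ ∈ C, ∀ x₂ ∈ C, ∀ t : ℝ, 0 < t → t < 1 →
      t • x₁ + (1 - t) • x₂ ∈ F → x₁ ∈ F ∧ x₂ ∈ F

/-- `F^⊥ = {Z ∈ S^n : Z • X = 0 for all X ∈ F}` within symmetric matrices. -/
def perp {n : ℕ} (F : Set (Mat n)) : Set (Mat n) :=
  {Z | Z.IsSymm ∧ ∀ X ∈ F, ip Z X = 0}

namespace PsdPerpAux

variable {n : ℕ}

lemma transpose_of_psd {A : Mat n} (h : A.PosSemidef) : Aᵀ = A := by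
  ext i j
  have := congrFun (congrFun h.1 i) j
  simpa [conjTranspose_apply] using this

lemma psd_smul {A : Mat n} (h : A.PosSemidef) {c : ℝ} (hc : 0 ≤ c) : (c • A).PosSemidef := by
  refine PosSemidef.of_dotProduct_mulVec_nonneg ?_ (fun x => ?_)
  · have := h.1
    ext i j
    have h2 := congrFun (congrFun this i) j
    simp only [conjTranspose_apply, Matrix.smul_apply, smul_eq_mul, star_trivial] at h2 ⊢
    rw [h2]
  · have := h.dotProduct_mulVec_nonneg x
    have h3 : (c • A) *ᵥ x = c • (A *ᵥ x) := smul_mulVec c A x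
    rw [h3, dotProduct_smul]
    exact mul_nonneg hc this

lemma psd_vecMulVec (v : Fin n → ℝ) : (vecMulVec v v).PosSemidef := by
  refine PosSemidef.of_dotProduct_mulVec_nonneg ?_ (fun x => ?_)
  · ext i j
    simp [conjTranspose_apply, vecMulVec_apply, mul_comm]
  · have : star x ⬝ᵥ (vecMulVec v v *ᵥ x) = (v ⬝ᵥ x) * (v ⬝ᵥ x) := by
      simp only [star_trivial, dotProduct, mulVec, vecMulVec_apply, Finset.mul_sum,
        Finset.sum_mul]
      rw [Finset.sum_comm]
      apply Finset.sum_congr rfl; intro i _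
      apply Finset.sum_congr rfl; intro j _
      ring
    rw [this]
    exact mul_self_nonneg _
 
lemma ip_vecMulVec (Z : Mat n) (v : Fin n → ℝ) :
    ip Z (vecMulVec v v) = v ⬝ᵥ (Z *ᵥ v) := by
  simp only [ip, vecMulVec_apply, dotProduct, mulVec, Finset.mul_sum]
  apply Finset.sum_congr rfl; intro i _
  apply Finset.sum_congr rfl; intro j _
  ring

lemma entry_symm {A : Mat n} (h : Aᵀ = A) (i j : Fin n) : A i j = A j i := by
  have := congrFun (congrFun h j) i
  rwa [transpose_apply] at this

lemma dot_mulVec_left (A : Mat n) (a b : Fin n → ℝ) :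
    (A *ᵥ a) ⬝ᵥ b = a ⬝ᵥ (Aᵀ *ᵥ b) := by
  simp only [dotProduct, mulVec, transpose_apply, Finset.sum_mul, Finset.mul_sum]
  rw [Finset.sum_comm]
  apply Finset.sum_congr rfl; intro i _
  apply Finset.sum_congr rfl; intro j _
  ring

lemma ip_zero (Z : Mat n) : ip Z 0 = 0 := by simp [ip]

lemma ip_add (Z A B : Mat n) : ip Z (A + B) = ip Z A + ip Z B := by
  simp [ip, mul_add, Finset.sum_add_distrib]

lemma ip_smul (Z : Mat n) (c : ℝ) (A : Mat n) : ip Z (c • A) = c * ip Z A := by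
  simp only [ip, Matrix.smul_apply, smul_eq_mul, Finset.mul_sum]
  apply Finset.sum_congr rfl; intro i _
  apply Finset.sum_congr rfl; intro j _
  ring

lemma ip_sum_smul (Z : Mat n) {ι : Type*} (s : Finset ι) (c : ι → ℝ) (M : ι → Mat n) :
    ip Z (∑ l ∈ s, c l • M l) = ∑ l ∈ s, c l * ip Z (M l) := by
  classical
  induction s using Finset.induction_on with
  | empty => simp [ip_zero]
  | insert _ _ h ih =>
      rw [Finset.sum_insert h, ip_add, ip_smul, ih, Finset.sum_insert h]


lemma psd_sum {ι : Type*} (s : Finset ι) (M : ι → Mat n) (h : ∀ i ∈ s, (M i).PosSemidef) :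
    (∑ i ∈ s, M i).PosSemidef := by
  classical
  induction s using Finset.induction_on with
  | empty => simpa using (Matrix.PosSemidef.zero : (0 : Mat n).PosSemidef)
  | insert _ _ hnot ih =>
      rw [Finset.sum_insert hnot]
      exact (h _ (Finset.mem_insert_self _ _)).add
        (ih fun i hi => h i (Finset.mem_insert_of_mem hi))

lemma psd_rank_one_decomp {X : Mat n} (hX : X.PosSemidef) :
    ∃ (lam : Fin n → ℝ) (w : Fin n → (Fin n → ℝ)), (∀ l, 0 ≤ lam l) ∧
      X = ∑ l, lam l • vecMulVec (w l) (w l) := by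
  have hH : X.IsHermitian := hX.1
  refine ⟨hH.eigenvalues, fun l => ⇑(hH.eigenvectorBasis l),
    fun l => hX.eigenvalues_nonneg l, ?_⟩
  ext i j
  conv_lhs => rw [hH.spectral_theorem]
  simp only [mul_apply, conjTranspose_apply, diagonal_apply, Function.comp_apply,
    Matrix.sum_apply, Matrix.smul_apply, vecMulVec_apply, Unitary.conjStarAlgAut_apply, smul_eq_mul, star_trivial,
    IsHermitian.eigenvectorUnitary_apply, Matrix.star_apply, mul_ite, mul_zero, ite_mul, zero_mul,
    Finset.sum_ite_eq, Finset.sum_ite_eq', Finset.mem_univ, if_true,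
    RCLike.ofReal_real_eq_id, id_eq]
  apply Finset.sum_congr rfl; intro l _
  ring

lemma PZP_zero {F : Set (Mat n)} {P : Mat n} (hPsymm : Pᵀ = P)
    (hrow : ∀ i, vecMulVec (fun l => P i l) (fun l => P i l) ∈ F)
    (hadd : ∀ u v : Fin n → ℝ, vecMulVec u u ∈ F → vecMulVec v v ∈ F →
      vecMulVec (u + v) (u + v) ∈ F)
    {Z : Mat n} (hZ : Zᵀ = Z) (hZF : ∀ X ∈ F, ip Z X = 0) : P * Z * P = 0 := by
  have hquad : ∀ v : Fin n → ℝ, vecMulVec v v ∈ F → v ⬝ᵥ (Z *ᵥ v) = 0 := fun v hv => by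
    rw [← ip_vecMulVec]; exact hZF _ hv
  have hbil : ∀ u v : Fin n → ℝ, vecMulVec u u ∈ F → vecMulVec v v ∈ F →
      u ⬝ᵥ (Z *ᵥ v) = 0 := by
    intro u v hu hv
    have hsum := hquad (u + v) (hadd u v hu hv)
    have h1 := hquad u hu
    have h2 := hquad v hv
    have hcomm : v ⬝ᵥ (Z *ᵥ u) = u ⬝ᵥ (Z *ᵥ v) := by
      have h3 := dot_mulVec_left Z v u
      rw [hZ] at h3
      rw [← h3, dotProduct_comm]
    rw [mulVec_add, dotProduct_add, add_dotProduct, add_dotProduct, h1, h2, hcomm] at hsum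
    linarith
  ext i j
  have hentry : (P * Z * P) i j = (fun l => P i l) ⬝ᵥ (Z *ᵥ (fun l => P l j)) := by
    simp only [mul_apply, dotProduct, mulVec, Finset.sum_mul, Finset.mul_sum]
    rw [Finset.sum_comm]
    apply Finset.sum_congr rfl; intro k _
    apply Finset.sum_congr rfl; intro l _
    ring
  have hcol : (fun l => P l j) = (fun l => P j l) := by
    funext l; exact entry_symm hPsymm l j
  rw [hentry, hcol]
  simp only [Matrix.zero_apply]
  exact hbil _ _ (hrow i) (hrow j)

section Face

variable {F : Set (Mat n)} (hF : IsFaceOf (psdCone n) F)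

include hF

lemma zero_mem_face (hFne : F.Nonempty) : (0 : Mat n) ∈ F := by
  obtain ⟨X, hX⟩ := hFne
  have hXpsd : X.PosSemidef := hF.1 hX
  have h2 : (X + X) ∈ psdCone n := hXpsd.add hXpsd
  have h0 : (0 : Mat n) ∈ psdCone n := PosSemidef.zero
  have key := hF.2.2 (X + X) h2 0 h0 (1/2) (by norm_num) (by norm_num)
  have : (1/2 : ℝ) • (X + X) + (1 - 1/2 : ℝ) • (0 : Mat n) = X := by
    rw [smul_add]
    simp
    module
  exact (key (by rw [this]; exact hX)).2

lemma smul_mem_face {X : Mat n} (hX : X ∈ F) {s : ℝ} (hs : 0 < s) : s • X ∈ F := by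
  have hXpsd : X.PosSemidef := hF.1 hX
  rcases lt_trichotomy s 1 with h1 | h1 | h1
  · -- s < 1 : X = (1/2) • (s•X) + (1/2) • ((2-s)•X)
    have hs2 : (0:ℝ) ≤ 2 - s := by linarith
    have key := hF.2.2 (s • X) (psd_smul hXpsd hs.le) ((2 - s) • X) (psd_smul hXpsd hs2)
       (1/2) (by norm_num) (by norm_num)
    have heq : (1/2 : ℝ) • (s • X) + (1 - 1/2 : ℝ) • ((2 - s) • X) = X := by
      rw [smul_smul, smul_smul]
      have : (1:ℝ) - 1/2 = 1/2 := by norm_num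
      rw [this, ← add_smul]
      have : (1/2 * s + 1/2 * (2 - s) : ℝ) = 1 := by ring
      rw [this, one_smul]
    exact (key (by rw [heq]; exact hX)).1
  · rw [h1, one_smul]; exact hX
  · -- s > 1 : X = (1/s) • (s•X) + (1 - 1/s) • 0
    have h0 : (0 : Mat n) ∈ psdCone n := PosSemidef.zero
    have key := hF.2.2 (s • X) (psd_smul hXpsd hs.le) 0 h0 (1/s)
      (by positivity) (by rw [div_lt_one (by linarith)]; linarith)
    have heq : (1/s : ℝ) • (s • X) + (1 - 1/s : ℝ) • (0 : Mat n) = X := by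
      rw [smul_zero, add_zero, smul_smul, one_div, inv_mul_cancel₀ (by linarith), one_smul]
    exact (key (by rw [heq]; exact hX)).1

lemma split_mem_face {X A B : Mat n} (hX : X ∈ F) (hA : A.PosSemidef) (hB : B.PosSemidef)
    (hAB : X = A + B) : A ∈ F ∧ B ∈ F := by
  have key := hF.2.2 ((2:ℝ) • A) (psd_smul hA (by norm_num)) ((2:ℝ) • B)
    (psd_smul hB (by norm_num)) (1/2) (by norm_num) (by norm_num)
  have heq : (1/2 : ℝ) • ((2:ℝ) • A) + (1 - 1/2 : ℝ) • ((2:ℝ) • B) = X := by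
    rw [hAB]; rw [smul_smul, smul_smul]; norm_num
  have h2 := key (by rw [heq]; exact hX)
  constructor
  · have := smul_mem_face hF h2.1 (s := 1/2) (by norm_num)
    rwa [smul_smul, one_div, inv_mul_cancel₀ (by norm_num : (2:ℝ) ≠ 0), one_smul] at this
  · have := smul_mem_face hF h2.2 (s := 1/2) (by norm_num)
    rwa [smul_smul, one_div, inv_mul_cancel₀ (by norm_num : (2:ℝ) ≠ 0), one_smul] at this

lemma add_mem_carrier (hFne : F.Nonempty) {u v : Fin n → ℝ}
    (hu : vecMulVec u u ∈ F) (hv : vecMulVec v v ∈ F) :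
    vecMulVec (u + v) (u + v) ∈ F := by
  -- 2 uuᵀ + 2 vvᵀ ∈ F
  have hconv := hF.2.1 hu hv (by norm_num : (0:ℝ) ≤ 1/2) (by norm_num : (0:ℝ) ≤ 1/2)
    (by norm_num)
  have hmem : ((4:ℝ) • ((1/2 : ℝ) • vecMulVec u u + (1/2 : ℝ) • vecMulVec v v)) ∈ F :=
    smul_mem_face hF hconv (by norm_num)
  have hsum : ((4:ℝ) • ((1/2 : ℝ) • vecMulVec u u + (1/2 : ℝ) • vecMulVec v v))
      = vecMulVec (u + v) (u + v) + vecMulVec (u - v) (u - v) := by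
    ext i j
    simp only [Matrix.smul_apply, Matrix.add_apply, vecMulVec_apply, smul_eq_mul, Pi.add_apply, Pi.sub_apply]
    ring
  exact (split_mem_face hF hmem (psd_vecMulVec _) (psd_vecMulVec _) hsum).1


lemma ip_zero_of_conj {P : Mat n} (hPsymm : Pᵀ = P)
    (hfix : ∀ v : Fin n → ℝ, vecMulVec v v ∈ F → P *ᵥ v = v)
    {Z : Mat n} (hZ : Zᵀ = Z) (hPZP : P * Z * P = 0) {X : Mat n} (hX : X ∈ F) :
    ip Z X = 0 := by
  classical
  have hXpsd : X.PosSemidef := hF.1 hX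
  obtain ⟨lam, w, hlam_nonneg, hdecomp⟩ := psd_rank_one_decomp hXpsd
  have hterm : ∀ l, lam l * ((w l) ⬝ᵥ (Z *ᵥ (w l))) = 0 := by
    intro l
    rcases eq_or_lt_of_le (hlam_nonneg l) with h0 | hpos
    · rw [← h0, zero_mul]
    · have hrest : (∑ m ∈ Finset.univ.erase l, lam m • vecMulVec (w m) (w m)).PosSemidef :=
        psd_sum _ _ fun m _ => psd_smul (psd_vecMulVec (w m)) (hlam_nonneg m)
      have hdec2 : X = lam l • vecMulVec (w l) (w l)
          + ∑ m ∈ Finset.univ.erase l, lam m • vecMulVec (w m) (w m) := by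
        rw [hdecomp, ← Finset.add_sum_erase _ _ (Finset.mem_univ l)]
      have hsplit := split_mem_face hF hX
        (psd_smul (psd_vecMulVec (w l)) (hlam_nonneg l)) hrest hdec2
      have hmemF : vecMulVec (w l) (w l) ∈ F := by
        have h5 := smul_mem_face hF hsplit.1 (s := (lam l)⁻¹) (by positivity)
        rwa [smul_smul, inv_mul_cancel₀ (ne_of_gt hpos), one_smul] at h5
      have hfixl : P *ᵥ (w l) = w l := hfix (w l) hmemF
      have h6 : (w l) ⬝ᵥ (Z *ᵥ (w l)) = (w l) ⬝ᵥ ((P * Z * P) *ᵥ (w l)) := by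
        conv_lhs => rw [← hfixl]
        rw [mulVec_mulVec, dot_mulVec_left, hPsymm, mulVec_mulVec, ← Matrix.mul_assoc]
      rw [h6, hPZP, zero_mulVec, dotProduct_zero, mul_zero]
  calc ip Z X = ∑ l, lam l * ip Z (vecMulVec (w l) (w l)) := by
        rw [hdecomp, ip_sum_smul]
    _ = ∑ l, lam l * ((w l) ⬝ᵥ (Z *ᵥ (w l))) := by
        apply Finset.sum_congr rfl; intro l _; rw [ip_vecMulVec]
    _ = 0 := by simp [hterm]

end Face

end PsdPerpAux

open PsdPerpAux

/-- Existence of a symmetric idempotent "projection" matrix capturing `perp F`. -/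
lemma exists_good_P {n : ℕ} (F : Set (Mat n)) (hF : IsFaceOf (psdCone n) F) :
    ∃ P : Mat n, Pᵀ = P ∧ P * P = P ∧
      (∀ Z : Mat n, Zᵀ = Z → (∀ X ∈ F, ip Z X = 0) → P * Z * P = 0) ∧
      (∀ Z : Mat n, Zᵀ = Z → P * Z * P = 0 → ∀ X ∈ F, ip Z X = 0) := by
  classical
  rcases F.eq_empty_or_nonempty with hFe | hFne
  · refine ⟨0, by simp, by simp, fun Z _ _ => by simp, fun Z _ _ X hX => ?_⟩
    rw [hFe] at hX; exact absurd hX (Set.notMem_empty X)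
  · -- the subspace U
    set U : Submodule ℝ (EuclideanSpace ℝ (Fin n)) :=
      { carrier := {v : EuclideanSpace ℝ (Fin n) | vecMulVec (v : Fin n → ℝ) v ∈ F}
        zero_mem' := by
          show vecMulVec _ _ ∈ F
          have h0 : vecMulVec ((0 : EuclideanSpace ℝ (Fin n)) : Fin n → ℝ)
              ((0 : EuclideanSpace ℝ (Fin n)) : Fin n → ℝ) = (0 : Mat n) := by
            ext i j
            show (0 : EuclideanSpace ℝ (Fin n)) i * (0 : EuclideanSpace ℝ (Fin n)) j = 0
            show (0:ℝ) * 0 = 0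
            ring
          rw [h0]
          exact zero_mem_face hF hFne
        add_mem' := fun hu hv => add_mem_carrier hF hFne hu hv
        smul_mem' := by
          intro c v hv
          show vecMulVec _ _ ∈ F
          have hkey : vecMulVec ((c • v : EuclideanSpace ℝ (Fin n)) : Fin n → ℝ)
              ((c • v : EuclideanSpace ℝ (Fin n)) : Fin n → ℝ)
              = (c^2) • vecMulVec (v : Fin n → ℝ) v := by
            ext i j
            show (c • v : EuclideanSpace ℝ (Fin n)) i * (c • v : EuclideanSpace ℝ (Fin n)) j = _
            show (c * v i) * (c * v j) = c^2 • ((v i) * (v j))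
            simp only [smul_eq_mul]
            ring
          rw [hkey]
          rcases eq_or_ne c 0 with rfl | hc
          · have : ((0:ℝ)^2) • vecMulVec (v : Fin n → ℝ) v = 0 := by
              norm_num
            rw [this]
            exact zero_mem_face hF hFne
          · exact smul_mem_face hF hv (by positivity) } with hU
    have hUmem : ∀ v : EuclideanSpace ℝ (Fin n), v ∈ U ↔ vecMulVec (v : Fin n → ℝ) v ∈ F :=
      fun v => Iff.rfl
    -- orthonormal basis of U
    set b := stdOrthonormalBasis ℝ U with hb
    set bv : Fin (Module.finrank ℝ U) → (Fin n → ℝ) :=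
      fun k => ((b k : EuclideanSpace ℝ (Fin n)) : Fin n → ℝ) with hbv
    set P : Mat n := ∑ k, vecMulVec (bv k) (bv k) with hP
    have hPsymm : Pᵀ = P := by
      ext i j
      simp only [hP, transpose_apply, Matrix.sum_apply, vecMulVec_apply]
      exact Finset.sum_congr rfl fun k _ => mul_comm _ _
    have hPmulVec : ∀ x : Fin n → ℝ,
        P *ᵥ x = ∑ k, (bv k ⬝ᵥ x) • bv k := by
      intro x
      funext i
      rw [Finset.sum_apply]
      simp only [hP, mulVec, dotProduct, Matrix.sum_apply, vecMulVec_apply,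
        Pi.smul_apply, smul_eq_mul, Finset.sum_mul, Finset.mul_sum]
      rw [Finset.sum_comm]
      apply Finset.sum_congr rfl; intro k _
      apply Finset.sum_congr rfl; intro j _
      ring
    have hPmem : ∀ x : Fin n → ℝ, (WithLp.toLp 2 (P *ᵥ x) : EuclideanSpace ℝ (Fin n)) ∈ U := by
      intro x
      rw [hPmulVec x]
      simp only [WithLp.toLp_sum, WithLp.toLp_smul, hbv, WithLp.toLp_ofLp]
      exact Submodule.sum_mem U fun k _ => Submodule.smul_mem U _ (by exact (b k).2)
    have hPfix : ∀ v : EuclideanSpace ℝ (Fin n), v ∈ U → P *ᵥ (v : Fin n → ℝ) = v := by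
      intro v hv
      rw [hPmulVec v]
      have hrepr := b.sum_repr ⟨v, hv⟩
      have hcoe : ∑ k, b.repr ⟨v, hv⟩ k • ((b k : EuclideanSpace ℝ (Fin n))) = v := by
        have h2 := congrArg (Submodule.subtype U) hrepr
        simpa [map_sum] using h2
      have hcoef : ∀ k, b.repr ⟨v, hv⟩ k = bv k ⬝ᵥ (v : Fin n → ℝ) := by
        intro k
        rw [b.repr_apply_apply, Submodule.coe_inner]
        simp [PiLp.inner_apply, dotProduct, hbv, mul_comm]
      have hstep : ∑ k, (bv k ⬝ᵥ (v : Fin n → ℝ)) • bv k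
          = ∑ k, b.repr ⟨v, hv⟩ k • bv k :=
        Finset.sum_congr rfl fun k _ => by rw [hcoef k]
      rw [hstep]
      have := congrArg WithLp.ofLp hcoe
      simpa [WithLp.ofLp_sum, hbv] using this
    have hPP : P * P = P := by
      have key : ∀ x : Fin n → ℝ, (P * P) *ᵥ x = P *ᵥ x := by
        intro x
        rw [← mulVec_mulVec]
        exact hPfix _ (hPmem x)
      ext i j
      have h3 := congrFun (key (Pi.single j 1)) i
      simpa [mulVec_single] using h3
    -- column/row of P lies in U
    have hProwU : ∀ i, (WithLp.toLp 2 (fun l => P i l : Fin n → ℝ) : EuclideanSpace ℝ (Fin n)) ∈ U := by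
      intro i
      have h4 : (fun l => P i l) = P *ᵥ Pi.single i 1 := by
        funext l
        simp only [mulVec_single_one, col_apply]
        exact entry_symm hPsymm i l
      rw [h4]
      exact hPmem _
    refine ⟨P, hPsymm, hPP, ?_, ?_⟩
    · -- K2
      intro Z hZ hZF
      apply PZP_zero hPsymm (F := F) _ _ hZ hZF
      · intro i
        exact (hUmem _).mp (hProwU i)
      · intro u v hu hv
        exact add_mem_carrier hF hFne hu hv
    · -- K3
      intro Z hZ hPZP X hX
      exact ip_zero_of_conj hF hPsymm
        (fun v hv => hPfix (WithLp.toLp 2 v) ((hUmem _).mpr hv)) hZ hPZP hX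

/-- The PSD cone is a closed set. -/
lemma psdCone_isClosed (n : ℕ) : IsClosed (psdCone n) := by
  have heq : psdCone n = {M : Mat n | Mᴴ = M} ∩
      ⋂ (x : Fin n → ℝ), {M : Mat n | 0 ≤ star x ⬝ᵥ (M *ᵥ x)} := by
    ext M
    simp only [psdCone, Set.mem_setOf_eq, Set.mem_inter_iff, Set.mem_iInter]
    exact posSemidef_iff_dotProduct_mulVec
  rw [heq]
  apply IsClosed.inter
  · exact isClosed_eq (continuous_id.matrix_conjTranspose) continuous_id
  · apply isClosed_iInter
    intro x
    apply isClosed_le continuous_const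
    exact Continuous.dotProduct continuous_const
      (continuous_id.matrix_mulVec continuous_const)

/-- For every face `F` of the PSD cone, the set `S^n_+ + F^⊥` is closed. -/
theorem psdCone_add_perp_isClosed (n : ℕ) (F : Set (Mat n))
    (hF : IsFaceOf (psdCone n) F) :
    IsClosed {W : Mat n | ∃ A ∈ psdCone n, ∃ Z ∈ perp F, W = A + Z} := by
  classical
  obtain ⟨P, hPsymm, hPP, hK2, hK3⟩ := exists_good_P F hF
  have hPH : Pᴴ = P := by
    ext i j
    have := congrFun (congrFun hPsymm i) j
    simpa [conjTranspose_apply] using this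
  have hset : {W : Mat n | ∃ A ∈ psdCone n, ∃ Z ∈ perp F, W = A + Z}
      = {W : Mat n | Wᵀ = W} ∩ (fun W : Mat n => P * W * P) ⁻¹' (psdCone n) := by
    ext W
    simp only [Set.mem_setOf_eq, Set.mem_inter_iff, Set.mem_preimage]
    constructor
    · rintro ⟨A, hA, Z, ⟨hZsymm, hZF⟩, rfl⟩
      have hAsymm : Aᵀ = A := transpose_of_psd hA
      have hZ0 : P * Z * P = 0 := hK2 Z hZsymm hZF
      constructor
      · rw [transpose_add, hAsymm, hZsymm]
      · have : P * (A + Z) * P = P * A * P := by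
          rw [Matrix.mul_add, Matrix.add_mul, hZ0, add_zero]
        rw [this]
        have := (hA : A.PosSemidef).mul_mul_conjTranspose_same P
        rwa [hPH] at this
    · rintro ⟨hWsymm, hpsd⟩
      refine ⟨P * W * P, hpsd, W - P * W * P, ⟨?_, ?_⟩, by abel⟩
      · show (W - P * W * P)ᵀ = W - P * W * P
        rw [transpose_sub, hWsymm, transpose_mul, transpose_mul, hPsymm, hWsymm,
          Matrix.mul_assoc]
      · apply hK3
        · rw [transpose_sub, hWsymm, transpose_mul, transpose_mul, hPsymm, hWsymm,
            Matrix.mul_assoc]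
        · have hcalc : P * (W - P * W * P) * P = P * W * P - (P * P) * W * (P * P) := by
            rw [Matrix.mul_sub, Matrix.sub_mul]
            congr 1
            simp only [Matrix.mul_assoc]
          rw [hcalc, hPP, sub_self]
  rw [hset]
  apply IsClosed.inter
  · exact isClosed_eq continuous_id.matrix_transpose continuous_id
  · exact (psdCone_isClosed n).preimage
      ((continuous_const.matrix_mul continuous_id).matrix_mul continuous_const)
end
end

section
/- For every face F of S^n_+, the dual cone F* = {Z ∈ S^n : Z • X ≥ 0 for all X ∈ F} equals S^n_+ + F^⊥. -/
open Matrix Set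

noncomputable section

namespace MyAux

variable {n : ℕ}

lemma herm_iff_symm (A : Mat n) : A.IsHermitian ↔ A.IsSymm := by
  constructor <;> intro h <;> ext i j
  · have := congrFun (congrFun h i) j
    simpa [Matrix.conjTranspose_apply] using this
  · have := congrFun (congrFun h i) j
    simpa [Matrix.conjTranspose_apply, Matrix.transpose_apply] using this

lemma transpose_eq_self_of_herm {A : Mat n} (h : A.IsHermitian) : Aᵀ = A := by
  ext i j
  have := congrFun (congrFun h i) j
  simpa [Matrix.conjTranspose_apply] using this

lemma ip_eq_trace (A B : Mat n) : ip A B = (Aᵀ * B).trace := by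
  simp only [ip, Matrix.trace, Matrix.diag, Matrix.mul_apply, Matrix.transpose_apply]
  rw [Finset.sum_comm]

lemma ip_add_left (A B X : Mat n) : ip (A + B) X = ip A X + ip B X := by
  simp only [ip, Matrix.add_apply, add_mul, Finset.sum_add_distrib]

lemma ip_sub_left (A B X : Mat n) : ip (A - B) X = ip A X - ip B X := by
  simp only [ip, Matrix.sub_apply, sub_mul, Finset.sum_sub_distrib]

lemma ip_outer (Z : Mat n) (w : Fin n → ℝ) :
    ip Z (Matrix.vecMulVec w w) = w ⬝ᵥ (Z *ᵥ w) := by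
  simp only [ip, Matrix.vecMulVec_apply, dotProduct, Matrix.mulVec, Finset.mul_sum]
  apply Finset.sum_congr rfl; intro i _
  apply Finset.sum_congr rfl; intro j _
  ring

lemma outer_mulVec (w x : Fin n → ℝ) :
    (Matrix.vecMulVec w w) *ᵥ x = (w ⬝ᵥ x) • w := by
  ext i
  simp only [Matrix.mulVec, Matrix.vecMulVec_apply, dotProduct, Pi.smul_apply,
    smul_eq_mul, Finset.sum_mul, Finset.mul_sum]
  apply Finset.sum_congr rfl; intro j _; ring

lemma outer_quad (w x : Fin n → ℝ) :
    x ⬝ᵥ ((Matrix.vecMulVec w w) *ᵥ x) = (w ⬝ᵥ x) * (w ⬝ᵥ x) := by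
  rw [outer_mulVec]
  simp only [dotProduct_smul, smul_eq_mul]
  rw [dotProduct_comm x w]

lemma outer_psd (w : Fin n → ℝ) : (Matrix.vecMulVec w w).PosSemidef := by
  refine Matrix.PosSemidef.of_dotProduct_mulVec_nonneg ?_ ?_
  · ext i j
    simp [Matrix.conjTranspose_apply, Matrix.vecMulVec_apply, mul_comm]
  · intro x
    simp only [star_trivial]
    rw [outer_quad]
    exact mul_self_nonneg _

lemma psd_smul {A : Mat n} (hA : A.PosSemidef) {c : ℝ} (hc : 0 ≤ c) :
    (c • A).PosSemidef := by
  refine Matrix.PosSemidef.of_dotProduct_mulVec_nonneg ?_ ?_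
  · ext i j
    have := congrFun (congrFun hA.1 i) j
    simp only [Matrix.conjTranspose_apply, Matrix.smul_apply, star_trivial] at this ⊢
    rw [this]
  · intro x
    rw [Matrix.smul_mulVec, dotProduct_smul]
    exact mul_nonneg hc (by simpa using hA.dotProduct_mulVec_nonneg x)

lemma psd_trace_nonneg {M : Mat n} (h : M.PosSemidef) : 0 ≤ M.trace := by
  have hdiag : ∀ i, 0 ≤ M i i := by
    intro i
    have := h.dotProduct_mulVec_nonneg (Pi.single i 1)
    simpa [dotProduct, Matrix.mulVec, Pi.single_apply, Finset.mul_sum] using this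
  exact Finset.sum_nonneg fun i _ => hdiag i

lemma ip_nonneg_of_psd {A X : Mat n} (hA : A.PosSemidef) (hX : X.PosSemidef) :
    0 ≤ ip A X := by
  rw [ip_eq_trace, transpose_eq_self_of_herm hA.1]
  obtain ⟨B, hB⟩ : ∃ B : Mat n, X = Bᴴ * B := by
    open scoped MatrixOrder in
    classical
    obtain ⟨Y, hY, -, hYX⟩ := CFC.exists_sqrt_of_isSelfAdjoint_of_quasispectrumRestricts
      hX.isHermitian (QuasispectrumRestricts.nnreal_of_nonneg hX.nonneg)
    exact ⟨Y, by rw [← hYX]; congr 1; exact hY.symm⟩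
  rw [hB, ← Matrix.mul_assoc, Matrix.trace_mul_comm, ← Matrix.mul_assoc]
  exact psd_trace_nonneg (hA.mul_mul_conjTranspose_same B)

lemma dot_sym {A : Mat n} (hA : A.IsHermitian) (u y : Fin n → ℝ) :
    u ⬝ᵥ (A *ᵥ y) = y ⬝ᵥ (A *ᵥ u) := by
  have hAt : Aᵀ = A := transpose_eq_self_of_herm hA
  rw [Matrix.dotProduct_mulVec]
  conv_lhs => rw [← hAt]
  rw [Matrix.vecMul_transpose, dotProduct_comm]

lemma cauchy_schwarz_psd {A : Mat n} (hA : A.PosSemidef) (u y : Fin n → ℝ) :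
    (u ⬝ᵥ (A *ᵥ y))^2 ≤ (u ⬝ᵥ (A *ᵥ u)) * (y ⬝ᵥ (A *ᵥ y)) := by
  have hsym := dot_sym hA.1 y u
  have expand : ∀ t : ℝ, (u ⬝ᵥ (A *ᵥ u)) * (t*t) + (2 * (u ⬝ᵥ (A *ᵥ y))) * t + (y ⬝ᵥ (A *ᵥ y))
      = (y + t • u) ⬝ᵥ (A *ᵥ (y + t • u)) := by
    intro t
    rw [Matrix.mulVec_add, Matrix.mulVec_smul, dotProduct_add, add_dotProduct,
      add_dotProduct, dotProduct_smul, smul_dotProduct,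
      smul_dotProduct, dotProduct_smul, hsym]
    simp only [smul_eq_mul]
    ring
  have hd := discrim_le_zero (a := u ⬝ᵥ (A *ᵥ u)) (b := 2 * (u ⬝ᵥ (A *ᵥ y)))
    (c := y ⬝ᵥ (A *ᵥ y)) (fun t => by rw [expand t]; simpa using hA.dotProduct_mulVec_nonneg (y + t • u))
  rw [discrim] at hd
  nlinarith [hd]

lemma ext_mulVec {M N : Mat n} (h : ∀ v, M *ᵥ v = N *ᵥ v) : M = N := by
  ext i j
  have := congrFun (h (Pi.single j 1)) i
  simpa [Matrix.mulVec_single] using this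

variable {F : Set (Mat n)} (hF : IsFaceOf (psdCone n) F)

include hF in
lemma zero_mem_face {x : Mat n} (hx : x ∈ F) : (0 : Mat n) ∈ F := by
  have hxp : x.PosSemidef := hF.1 hx
  have h0 : (0 : Mat n) ∈ psdCone n := Matrix.PosSemidef.zero
  have h2 : (2 : ℝ) • x ∈ psdCone n := psd_smul hxp (by norm_num)
  have := hF.2.2 0 h0 ((2:ℝ) • x) h2 (1/2) (by norm_num) (by norm_num) ?_
  · exact this.1
  · have : ((1:ℝ) - 1/2) • ((2:ℝ) • x) = x := by
      rw [smul_smul]; norm_num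
    rw [smul_zero, zero_add, this]; exact hx

include hF in
lemma smul_mem_face {x : Mat n} (hx : x ∈ F) {c : ℝ} (hc : 0 < c) : c • x ∈ F := by
  have h0 : (0 : Mat n) ∈ F := zero_mem_face hF hx
  rcases le_or_gt c 1 with h1 | h1
  · rcases eq_or_lt_of_le h1 with h1 | h1
    · rw [h1, one_smul]; exact hx
    · have := hF.2.1 hx h0 (show (0:ℝ) ≤ c from hc.le) (show (0:ℝ) ≤ 1 - c by linarith)
        (show c + (1 - c) = 1 by ring)
      simpa using this
  · have hcx : c • x ∈ psdCone n := psd_smul (hF.1 hx) (le_of_lt hc)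
    have h0' : (0 : Mat n) ∈ psdCone n := Matrix.PosSemidef.zero
    have := hF.2.2 (c • x) hcx 0 h0' (1/c) (by positivity) (by
      rw [div_lt_one hc]; linarith) ?_
    · exact this.1
    · rw [smul_zero, add_zero, smul_smul]
      rw [one_div, inv_mul_cancel₀ (ne_of_gt hc), one_smul]
      exact hx

include hF in
lemma add_mem_face {x y : Mat n} (hx : x ∈ F) (hy : y ∈ F) : x + y ∈ F := by
  have := hF.2.1 hx hy (by norm_num : (0:ℝ) ≤ 1/2) (by norm_num : (0:ℝ) ≤ 1/2) (by norm_num)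
  have h2 := smul_mem_face hF this (by norm_num : (0:ℝ) < 2)
  rw [smul_add, smul_smul, smul_smul] at h2
  norm_num at h2
  exact h2

include hF in
lemma half_mem_face {x y : Mat n} (hx : x ∈ psdCone n) (hy : y ∈ psdCone n)
    (hsum : x + y ∈ F) : x ∈ F := by
  have h2x : (2:ℝ) • x ∈ psdCone n := psd_smul hx (by norm_num)
  have h2y : (2:ℝ) • y ∈ psdCone n := psd_smul hy (by norm_num)
  have hcomb : (1/2 : ℝ) • ((2:ℝ) • x) + (1 - 1/2 : ℝ) • ((2:ℝ) • y) = x + y := by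
    rw [smul_smul, smul_smul]; norm_num
  have := hF.2.2 _ h2x _ h2y (1/2) (by norm_num) (by norm_num) (by rw [hcomb]; exact hsum)
  have hhalf := smul_mem_face hF this.1 (show (0:ℝ) < 1/2 by norm_num)
  rw [smul_smul] at hhalf
  norm_num at hhalf
  exact hhalf

lemma ker_add_psd {A B : Mat n} (hA : A.PosSemidef) (hB : B.PosSemidef) (v : Fin n → ℝ)
    (h : (A + B) *ᵥ v = 0) : A *ᵥ v = 0 ∧ B *ᵥ v = 0 := by
  have hq : v ⬝ᵥ ((A + B) *ᵥ v) = 0 := by rw [h]; simp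
  rw [Matrix.add_mulVec, dotProduct_add] at hq
  have ha : (0:ℝ) ≤ v ⬝ᵥ (A *ᵥ v) := by simpa using hA.dotProduct_mulVec_nonneg v
  have hb : (0:ℝ) ≤ v ⬝ᵥ (B *ᵥ v) := by simpa using hB.dotProduct_mulVec_nonneg v
  have ha0 : v ⬝ᵥ (A *ᵥ v) = 0 := by linarith
  have hb0 : v ⬝ᵥ (B *ᵥ v) = 0 := by linarith
  constructor
  · exact (hA.dotProduct_mulVec_zero_iff v).mp (by simpa using ha0)
  · exact (hB.dotProduct_mulVec_zero_iff v).mp (by simpa using hb0)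

lemma exists_min_ker (F' : Set (Mat n)) (hne : F'.Nonempty) :
    ∃ X₀ ∈ F', ∀ X ∈ F', Module.finrank ℝ (LinearMap.ker X₀.mulVecLin) ≤
        Module.finrank ℝ (LinearMap.ker X.mulVecLin) := by
  set s : Set ℕ := (fun X : Mat n => Module.finrank ℝ (LinearMap.ker X.mulVecLin)) '' F' with hs
  have hsne : s.Nonempty := hne.image _
  obtain ⟨X₀, hX₀, hmin⟩ : ∃ X₀ ∈ F',
      Module.finrank ℝ (LinearMap.ker X₀.mulVecLin) = sInf s := by
    obtain ⟨X₀, hX₀, h⟩ := Nat.sInf_mem hsne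
    exact ⟨X₀, hX₀, h⟩
  refine ⟨X₀, hX₀, fun X hX => ?_⟩
  rw [hmin]
  exact Nat.sInf_le ⟨X, hX, rfl⟩

lemma ker_le_of_min {F' : Set (Mat n)} (hpsd : ∀ X ∈ F', X.PosSemidef)
    (hadd : ∀ X ∈ F', ∀ Y ∈ F', X + Y ∈ F')
    {X₀ : Mat n} (hX₀ : X₀ ∈ F')
    (hmin : ∀ X ∈ F', Module.finrank ℝ (LinearMap.ker X₀.mulVecLin) ≤
        Module.finrank ℝ (LinearMap.ker X.mulVecLin))
    {X : Mat n} (hX : X ∈ F') :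
    LinearMap.ker X₀.mulVecLin ≤ LinearMap.ker X.mulVecLin := by
  have hsum : X₀ + X ∈ F' := hadd _ hX₀ _ hX
  have hle : LinearMap.ker (X₀ + X).mulVecLin ≤ LinearMap.ker X₀.mulVecLin := by
    intro v hv
    rw [LinearMap.mem_ker, Matrix.mulVecLin_apply] at hv ⊢
    exact (ker_add_psd (hpsd _ hX₀) (hpsd _ hX) v hv).1
  have hle' : LinearMap.ker (X₀ + X).mulVecLin ≤ LinearMap.ker X.mulVecLin := by
    intro v hv
    rw [LinearMap.mem_ker, Matrix.mulVecLin_apply] at hv ⊢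
    exact (ker_add_psd (hpsd _ hX₀) (hpsd _ hX) v hv).2
  have heq : LinearMap.ker (X₀ + X).mulVecLin = LinearMap.ker X₀.mulVecLin :=
    Submodule.eq_of_le_of_finrank_le hle (hmin _ hsum)
  rw [← heq]
  exact hle'

lemma exists_proj {X₀ : Mat n} (h : X₀.IsHermitian) :
    ∃ P R : Mat n, P.IsHermitian ∧ P = X₀ * R ∧ P * X₀ = X₀ := by
  set U : Mat n := (h.eigenvectorUnitary : Mat n) with hU
  have hUU' : star U * U = 1 := Matrix.mem_unitaryGroup_iff'.mp (h.eigenvectorUnitary).2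
  set μ : Fin n → ℝ := h.eigenvalues with hμ
  have hspec : X₀ = U * Matrix.diagonal μ * star U := by
    convert h.spectral_theorem using 3
    rw [Unitary.conjStarAlgAut_apply]; rfl
  set E : Mat n := Matrix.diagonal (fun i => if μ i = 0 then 0 else (μ i)⁻¹) with hE
  set R : Mat n := U * E * star U with hR
  have hcollapse : ∀ d₁ d₂ : Fin n → ℝ,
      (U * Matrix.diagonal d₁ * star U) * (U * Matrix.diagonal d₂ * star U)
        = U * Matrix.diagonal (fun i => d₁ i * d₂ i) * star U := by
    intro d₁ d₂
    have : star U * (U * (Matrix.diagonal d₂ * star U)) = Matrix.diagonal d₂ * star U := by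
      rw [← Matrix.mul_assoc, ← Matrix.mul_assoc, hUU', Matrix.one_mul]
    simp only [Matrix.mul_assoc]
    rw [this, ← Matrix.mul_assoc (Matrix.diagonal d₁), Matrix.diagonal_mul_diagonal]
  have hsandherm : ∀ d : Fin n → ℝ, (U * Matrix.diagonal d * star U).IsHermitian := by
    intro d
    have : (U * Matrix.diagonal d * star U)ᴴ = U * Matrix.diagonal d * star U := by
      rw [Matrix.conjTranspose_mul, Matrix.conjTranspose_mul]
      have h1 : (star U : Mat n)ᴴ = U := by
        simp [Matrix.star_eq_conjTranspose]
      have h2 : (Matrix.diagonal d)ᴴ = Matrix.diagonal d := by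
        simp [Matrix.diagonal_conjTranspose]
      rw [h1, h2, Matrix.star_eq_conjTranspose, Matrix.mul_assoc]
    exact this
  have key : X₀ * R = U * Matrix.diagonal (fun i => if μ i = 0 then 0 else 1) * star U := by
    rw [hspec, hR, hE, hcollapse]
    congr 2
    funext i j
    by_cases hi : μ i = 0
    · simp [Matrix.diagonal, hi]
    · simp [Matrix.diagonal, hi, mul_inv_cancel₀ hi]
  refine ⟨X₀ * R, R, ?_, rfl, ?_⟩
  · rw [key]; exact hsandherm _
  · rw [key]
    conv_lhs => rw [hspec]
    rw [hcollapse]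
    rw [hspec]
    congr 2
    funext i j
    by_cases hi : μ i = 0
    · simp [Matrix.diagonal, hi]
    · simp [Matrix.diagonal, hi]

end MyAux

open MyAux

/-- For every face `F` of `S^n_+`, the dual cone
`F* = {Z ∈ S^n : Z • X ≥ 0 for all X ∈ F}` equals `S^n_+ + F^⊥`. -/
theorem dualCone_eq_psdCone_add_perp (n : ℕ) (F : Set (Mat n))
    (hF : IsFaceOf (psdCone n) F) :
    {Z : Mat n | Z.IsSymm ∧ ∀ X ∈ F, 0 ≤ ip Z X} =
      {W : Mat n | ∃ A ∈ psdCone n, ∃ Z ∈ perp F, W = A + Z} := by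
  ext Z
  constructor
  · rintro ⟨hZsym, hZ⟩
    by_cases hne : F.Nonempty
    · -- main case
      have hpsd : ∀ X ∈ F, X.PosSemidef := fun X hX => hF.1 hX
      have hadd : ∀ X ∈ F, ∀ Y ∈ F, X + Y ∈ F := fun X hX Y hY => add_mem_face hF hX hY
      obtain ⟨X₀, hX₀F, hminker⟩ := exists_min_ker F hne
      have hker : ∀ X ∈ F, LinearMap.ker X₀.mulVecLin ≤ LinearMap.ker X.mulVecLin :=
        fun X hX => ker_le_of_min hpsd hadd hX₀F hminker hX
      have hX₀psd : X₀.PosSemidef := hF.1 hX₀F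
      obtain ⟨P, R, hPH, hPR, hPX₀⟩ := exists_proj hX₀psd.1
      have hPt : Pᵀ = P := transpose_eq_self_of_herm hPH
      have hX₀t : X₀ᵀ = X₀ := transpose_eq_self_of_herm hX₀psd.1
      have hZt : Zᵀ = Z := hZsym
      have hX₀P : X₀ * P = X₀ := by
        have := congrArg Matrix.transpose hPX₀
        rwa [Matrix.transpose_mul, hX₀t, hPt] at this
      -- X * P = X and P * X = X for all X ∈ F
      have hXP : ∀ X ∈ F, X * P = X := by
        intro X hX
        apply ext_mulVec
        intro v
        have h1 : X₀ *ᵥ (P *ᵥ v - v) = 0 := by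
          rw [Matrix.mulVec_sub, Matrix.mulVec_mulVec, hX₀P]
          simp
        have h2 : X *ᵥ (P *ᵥ v - v) = 0 := by
          have := hker X hX (show (P *ᵥ v - v) ∈ LinearMap.ker X₀.mulVecLin by
            rw [LinearMap.mem_ker, Matrix.mulVecLin_apply]; exact h1)
          rwa [LinearMap.mem_ker, Matrix.mulVecLin_apply] at this
        rw [Matrix.mulVec_sub, sub_eq_zero] at h2
        rw [← Matrix.mulVec_mulVec]
        exact h2
      have hPX : ∀ X ∈ F, P * X = X := by
        intro X hX
        have hXt : Xᵀ = X := transpose_eq_self_of_herm (hpsd X hX).1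
        have := congrArg Matrix.transpose (hXP X hX)
        rwa [Matrix.transpose_mul, hPt, hXt] at this
      -- outer products of vectors in range of P are in F
      have houter : ∀ v : Fin n → ℝ, Matrix.vecMulVec (P *ᵥ v) (P *ᵥ v) ∈ F := by
        intro v
        set u : Fin n → ℝ := R *ᵥ v with hu
        set w : Fin n → ℝ := P *ᵥ v with hw
        have hwu : w = X₀ *ᵥ u := by
          rw [hw, hu, hPR, ← Matrix.mulVec_mulVec]
        set c : ℝ := u ⬝ᵥ (X₀ *ᵥ u) with hc
        have hc0 : 0 ≤ c := by simpa using hX₀psd.dotProduct_mulVec_nonneg u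
        rcases eq_or_lt_of_le hc0 with hceq | hcpos
        · -- c = 0 : w = 0
          have hXu : X₀ *ᵥ u = 0 :=
            (hX₀psd.dotProduct_mulVec_zero_iff u).mp (by simpa using hceq.symm)
          have hw0 : w = 0 := by rw [hwu, hXu]
          have : Matrix.vecMulVec w w = 0 := by
            ext i j
            simp [Matrix.vecMulVec_apply, hw0]
          rw [this]
          exact zero_mem_face hF hX₀F
        · -- c > 0
          set M : Mat n := c • X₀ - Matrix.vecMulVec w w with hM
          have hMpsd : M.PosSemidef := by
            refine Matrix.PosSemidef.of_dotProduct_mulVec_nonneg ?_ ?_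
            · rw [herm_iff_symm]
              unfold Matrix.IsSymm
              rw [hM, Matrix.transpose_sub, Matrix.transpose_smul, hX₀t,
                transpose_eq_self_of_herm (outer_psd w).1]
            · intro y
              simp only [star_trivial, hM, Matrix.sub_mulVec, dotProduct_sub,
                Matrix.smul_mulVec, dotProduct_smul, smul_eq_mul]
              rw [outer_quad]
              have hwy : w ⬝ᵥ y = u ⬝ᵥ (X₀ *ᵥ y) := by
                rw [hwu, dotProduct_comm, dot_sym hX₀psd.1]
              have hcs := cauchy_schwarz_psd hX₀psd u y
              rw [hwy]
              nlinarith [hcs]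
          have hsum : Matrix.vecMulVec w w + M = c • X₀ := by
            rw [hM]; abel
          have hcX₀ : c • X₀ ∈ F := smul_mem_face hF hX₀F hcpos
          exact half_mem_face hF (outer_psd w) hMpsd (by rw [hsum]; exact hcX₀)
      -- build decomposition
      refine ⟨P * Z * P, ?_, Z - P * Z * P, ⟨?_, ?_⟩, by abel⟩
      · -- PSD
        refine Matrix.PosSemidef.of_dotProduct_mulVec_nonneg ?_ ?_
        · rw [herm_iff_symm]
          unfold Matrix.IsSymm
          rw [Matrix.transpose_mul, Matrix.transpose_mul, hPt, hZt, Matrix.mul_assoc]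
        · intro y
          simp only [star_trivial]
          have : (P * Z * P) *ᵥ y = P *ᵥ (Z *ᵥ (P *ᵥ y)) := by
            rw [← Matrix.mulVec_mulVec, ← Matrix.mulVec_mulVec]
          rw [this, dot_sym hPH, dotProduct_comm]
          have := hZ _ (houter y)
          rwa [ip_outer] at this
      · -- symm of Z - PZP
        unfold Matrix.IsSymm
        rw [Matrix.transpose_sub, hZt, Matrix.transpose_mul, Matrix.transpose_mul, hPt, hZt,
          Matrix.mul_assoc]
      · -- perp
        intro X hX
        rw [ip_sub_left, ip_eq_trace, ip_eq_trace, hZt]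
        have hAt : (P * Z * P)ᵀ = P * Z * P := by
          rw [Matrix.transpose_mul, Matrix.transpose_mul, hPt, hZt, Matrix.mul_assoc]
        rw [hAt]
        have h1 : P * Z * P * X = P * (Z * X) := by
          rw [Matrix.mul_assoc (P * Z), hPX X hX, Matrix.mul_assoc]
        rw [h1, Matrix.trace_mul_comm P (Z * X), Matrix.mul_assoc, hXP X hX,
          Matrix.trace_mul_comm Z X, sub_self]
    · -- F empty
      rw [Set.not_nonempty_iff_eq_empty] at hne
      refine ⟨0, Matrix.PosSemidef.zero, Z, ⟨hZsym, ?_⟩, by rw [zero_add]⟩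
      intro X hX
      rw [hne] at hX
      exact absurd hX (Set.notMem_empty X)
  · rintro ⟨A, hA, Y, ⟨hYsym, hYperp⟩, rfl⟩
    constructor
    · unfold Matrix.IsSymm
      rw [Matrix.transpose_add, transpose_eq_self_of_herm hA.1, hYsym]
    · intro X hX
      rw [ip_add_left, hYperp X hX, add_zero]
      exact ip_nonneg_of_psd hA (hF.1 hX)
end
end

section
/- Suppose the primal SDP sup{bᵀy : A₀ - Σ_k y_k A_k ∈ S^n_+} has a strictly feasible point (i.e., some y with A₀ - Σ_k y_k A_k positive definite) and the dual SDP inf{A₀ • X : A_k • X = b_k (k=1,…,m), X ∈ S^n_+} is feasible. Then the set of optimal solutions of the dual SDP is a nonempty compact set and the optimal values of the primal and dual coincide. -/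
open Matrix Set

noncomputable section

namespace SDPAux

variable {n m : ℕ}

/-- `ip A ·` as a linear map. -/
def ipl (A : Mat n) : Mat n →ₗ[ℝ] ℝ where
  toFun B := ip A B
  map_add' B C := by simp [ip, mul_add, Finset.sum_add_distrib]
  map_smul' c B := by
    simp [ip, Finset.mul_sum, Matrix.smul_apply, smul_eq_mul, mul_left_comm]

lemma ip_comm (A B : Mat n) : ip A B = ip B A := by
  simp [ip, mul_comm]

lemma ip_smul_right (A : Mat n) (c : ℝ) (B : Mat n) : ip A (c • B) = c * ip A B :=
  map_smul (ipl A) c B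

lemma ip_sub_right (A B C : Mat n) : ip A (B - C) = ip A B - ip A C :=
  map_sub (ipl A) B C

lemma ip_sum_right (A : Mat n) (s : Finset (Fin m)) (f : Fin m → Mat n) :
    ip A (∑ k ∈ s, f k) = ∑ k ∈ s, ip A (f k) :=
  map_sum (ipl A) f s

lemma dot_self_pos {v : Fin n → ℝ} (h : v ≠ 0) : 0 < v ⬝ᵥ v := by
  obtain ⟨i, hi⟩ := Function.ne_iff.mp h
  calc (0:ℝ) < v i * v i := mul_self_pos.mpr hi
    _ ≤ v ⬝ᵥ v := Finset.single_le_sum (f := fun j => v j * v j)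
        (fun j _ => mul_self_nonneg _) (Finset.mem_univ i)

lemma dot_self_nonneg (v : Fin n → ℝ) : 0 ≤ v ⬝ᵥ v :=
  Finset.sum_nonneg fun j _ => mul_self_nonneg _

lemma psd_quad {X : Mat n} (hX : X.PosSemidef) (v : Fin n → ℝ) : 0 ≤ v ⬝ᵥ X *ᵥ v := by
  simpa using hX.dotProduct_mulVec_nonneg v

lemma posdef_quad {M : Mat n} (hM : M.PosDef) {v : Fin n → ℝ} (hv : v ≠ 0) :
    0 < v ⬝ᵥ M *ᵥ v := by simpa using hM.dotProduct_mulVec_pos hv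

/-- key sum rewriting: `ip M (Bᴴ * B)` as a sum of quadratic forms over rows of `B`. -/
lemma ip_conjTranspose_mul (M B : Mat n) :
    ip M (Bᴴ * B) = ∑ i, (fun j => B i j) ⬝ᵥ M *ᵥ (fun j => B i j) := by
  simp only [ip, Matrix.mul_apply, Matrix.conjTranspose_apply, star_trivial, dotProduct,
    Matrix.mulVec, Finset.mul_sum, Finset.sum_mul]
  conv_rhs => rw [Finset.sum_comm]
  refine Finset.sum_congr rfl fun j _ => ?_
  rw [Finset.sum_comm]
  refine Finset.sum_congr rfl fun k _ => Finset.sum_congr rfl fun i _ => by ring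

lemma trace_conjTranspose_mul (B : Mat n) :
    (Bᴴ * B).trace = ∑ i, (fun j => B i j) ⬝ᵥ (fun j => B i j) := by
  simp only [Matrix.trace, Matrix.diag, Matrix.mul_apply, Matrix.conjTranspose_apply,
    star_trivial, dotProduct]
  exact Finset.sum_comm

/-- `ip` of two PSD matrices is nonnegative. -/
lemma ip_nonneg {P X : Mat n} (hP : P.PosSemidef) (hX : X.PosSemidef) : 0 ≤ ip P X := by
  obtain ⟨B, rfl⟩ : ∃ B : Mat n, X = Bᴴ * B :=
    by open scoped MatrixOrder in exact CStarAlgebra.nonneg_iff_eq_star_mul_self.mp hX.nonneg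
  rw [ip_conjTranspose_mul]
  exact Finset.sum_nonneg fun i _ => psd_quad hP _

/-- quadratic lower bound from a lower-bounded quadratic form, given for PSD matrices. -/
lemma ip_ge_of_quad {M : Mat n} {ε : ℝ} (h : ∀ v : Fin n → ℝ, ε * (v ⬝ᵥ v) ≤ v ⬝ᵥ M *ᵥ v)
    {X : Mat n} (hX : X.PosSemidef) : ε * X.trace ≤ ip M X := by
  obtain ⟨B, rfl⟩ : ∃ B : Mat n, X = Bᴴ * B :=
    by open scoped MatrixOrder in exact CStarAlgebra.nonneg_iff_eq_star_mul_self.mp hX.nonneg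
  rw [ip_conjTranspose_mul, trace_conjTranspose_mul, Finset.mul_sum]
  exact Finset.sum_le_sum fun i _ => h _

/-- A positive definite quadratic form admits a coercivity constant. -/
lemma quad_smul (M : Mat n) (c : ℝ) (v : Fin n → ℝ) :
    (c • v) ⬝ᵥ M *ᵥ (c • v) = c * c * (v ⬝ᵥ M *ᵥ v) := by
  rw [Matrix.mulVec_smul, smul_dotProduct, dotProduct_smul]
  simp [smul_eq_mul]; ring

lemma quad_continuous (M : Mat n) : Continuous fun v : Fin n → ℝ => v ⬝ᵥ M *ᵥ v := by
  have : (fun v : Fin n → ℝ => v ⬝ᵥ M *ᵥ v)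
      = fun v => ∑ i, v i * ∑ j, M i j * v j := rfl
  rw [this]
  exact continuous_finset_sum _ fun i _ =>
    (continuous_apply i).mul (continuous_finset_sum _ fun j _ =>
      continuous_const.mul (continuous_apply j))

lemma quad_lower {M : Mat n} (hM : ∀ v : Fin n → ℝ, v ≠ 0 → 0 < v ⬝ᵥ M *ᵥ v) :
    ∃ ε > 0, ∀ v : Fin n → ℝ, ε * (v ⬝ᵥ v) ≤ v ⬝ᵥ M *ᵥ v := by
  rcases Nat.eq_zero_or_pos n with hn | hn
  · refine ⟨1, one_pos, fun v => ?_⟩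
    subst hn
    simp [dotProduct]
  · have hS : IsCompact (Metric.sphere (0 : Fin n → ℝ) 1) := isCompact_sphere _ _
    have hne : (Metric.sphere (0 : Fin n → ℝ) 1).Nonempty := by
      set w : Fin n → ℝ := Pi.single (⟨0, hn⟩ : Fin n) 1 with hw
      have hw0 : w ≠ 0 := by
        intro h
        have := congrFun h ⟨0, hn⟩
        simp [hw, Pi.single_eq_same] at this
      have hwn : ‖w‖ ≠ 0 := norm_ne_zero_iff.mpr hw0
      refine ⟨‖w‖⁻¹ • w, ?_⟩
      simp [norm_smul, abs_of_nonneg (inv_nonneg.mpr (norm_nonneg w)),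
        inv_mul_cancel₀ hwn]
    obtain ⟨v₀, hv₀S, hv₀min⟩ := hS.exists_isMinOn hne (quad_continuous M).continuousOn
    have hv₀norm : ‖v₀‖ = 1 := by simpa using hv₀S
    have hv₀ne : v₀ ≠ 0 := by
      intro h; rw [h] at hv₀norm; simp at hv₀norm
    set ε₀ : ℝ := v₀ ⬝ᵥ M *ᵥ v₀ with hε₀
    have hε₀pos : 0 < ε₀ := hM v₀ hv₀ne
    refine ⟨ε₀ / n, div_pos hε₀pos (by exact_mod_cast hn), fun v => ?_⟩
    rcases eq_or_ne v 0 with rfl | hv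
    · simp [dotProduct]
    · have hvn : ‖v‖ ≠ 0 := norm_ne_zero_iff.mpr hv
      set w : Fin n → ℝ := ‖v‖⁻¹ • v with hwdef
      have hwS : w ∈ Metric.sphere (0 : Fin n → ℝ) 1 := by
        simp [hwdef, norm_smul, abs_of_nonneg (inv_nonneg.mpr (norm_nonneg v)),
          inv_mul_cancel₀ hvn]
      have hqw : ε₀ ≤ w ⬝ᵥ M *ᵥ w := hv₀min hwS
      have hvw : v = ‖v‖ • w := by
        rw [hwdef, smul_smul, mul_inv_cancel₀ hvn, one_smul]
      have hqv : v ⬝ᵥ M *ᵥ v = ‖v‖ * ‖v‖ * (w ⬝ᵥ M *ᵥ w) := by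
        conv_lhs => rw [hvw]
        exact quad_smul M _ w
      have hdotle : v ⬝ᵥ v ≤ n * (‖v‖ * ‖v‖) := by
        have : ∀ i, v i * v i ≤ ‖v‖ * ‖v‖ := fun i => by
          have h1 : |v i| ≤ ‖v‖ := by
            simpa using norm_le_pi_norm v i
          have := mul_le_mul h1 h1 (abs_nonneg _) (norm_nonneg v)
          simpa [abs_mul_abs_self] using this
        calc v ⬝ᵥ v = ∑ i, v i * v i := rfl
          _ ≤ ∑ _i : Fin n, ‖v‖ * ‖v‖ := Finset.sum_le_sum fun i _ => this i
          _ = n * (‖v‖ * ‖v‖) := by simp [Finset.sum_const, nsmul_eq_mul]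
      have hn' : (0:ℝ) < n := by exact_mod_cast hn
      calc ε₀ / n * (v ⬝ᵥ v) ≤ ε₀ / n * (n * (‖v‖ * ‖v‖)) := by
            apply mul_le_mul_of_nonneg_left hdotle
            positivity
        _ = ε₀ * (‖v‖ * ‖v‖) := by field_simp
        _ ≤ (w ⬝ᵥ M *ᵥ w) * (‖v‖ * ‖v‖) := by
            apply mul_le_mul_of_nonneg_right hqw
            positivity
        _ = v ⬝ᵥ M *ᵥ v := by rw [hqv]; ring

/-- perturbation estimate for quadratic forms. -/
lemma quad_perturb {D : Mat n} {δ : ℝ} (hD : ∀ i j, |D i j| ≤ δ) (v : Fin n → ℝ) :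
    |v ⬝ᵥ D *ᵥ v| ≤ δ * n * (v ⬝ᵥ v) := by
  rcases Nat.eq_zero_or_pos n with hn | hn
  · subst hn
    simp [dotProduct, Matrix.mulVec]
  · have hδ : 0 ≤ δ := le_trans (abs_nonneg _) (hD ⟨0, hn⟩ ⟨0, hn⟩)
    have h0 : v ⬝ᵥ D *ᵥ v = ∑ i, v i * ∑ j, D i j * v j := rfl
    have h1 : |v ⬝ᵥ D *ᵥ v| ≤ ∑ i, |v i| * ∑ j, δ * |v j| := by
      rw [h0]
      refine le_trans (Finset.abs_sum_le_sum_abs _ _) (Finset.sum_le_sum fun i _ => ?_)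
      rw [abs_mul]
      apply mul_le_mul_of_nonneg_left _ (abs_nonneg _)
      refine le_trans (Finset.abs_sum_le_sum_abs _ _) (Finset.sum_le_sum fun j _ => ?_)
      rw [abs_mul]
      exact mul_le_mul_of_nonneg_right (hD i j) (abs_nonneg _)
    have h2 : ∑ i, |v i| * ∑ j, δ * |v j| = δ * (∑ i, |v i|) ^ 2 := by
      rw [← Finset.sum_mul, ← Finset.mul_sum]
      ring
    have h3 : (∑ i, |v i|) ^ 2 ≤ n * ∑ i, v i * v i := by
      have := sq_sum_le_card_mul_sum_sq (s := (Finset.univ : Finset (Fin n)))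
        (f := fun i => |v i|)
      simpa [sq_abs, sq] using this
    calc |v ⬝ᵥ D *ᵥ v| ≤ δ * (∑ i, |v i|) ^ 2 := by rw [← h2]; exact h1
      _ ≤ δ * (n * ∑ i, v i * v i) := mul_le_mul_of_nonneg_left h3 hδ
      _ = δ * n * (v ⬝ᵥ v) := by rw [mul_assoc]; rfl

/-- the set of matrices with positive definite quadratic form (no symmetry) is open. -/
lemma isOpen_Q : IsOpen {M : Mat n | ∀ v : Fin n → ℝ, v ≠ 0 → 0 < v ⬝ᵥ M *ᵥ v} := by
  rcases Nat.eq_zero_or_pos n with hn | hn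
  · subst hn
    convert isOpen_univ
    ext M
    simp only [Set.mem_setOf_eq, Set.mem_univ, iff_true]
    intro v hv
    exact absurd (Subsingleton.elim v 0) hv
  · have key : IsOpen (X := Fin n → Fin n → ℝ)
        {M : Mat n | ∀ v : Fin n → ℝ, v ≠ 0 → 0 < v ⬝ᵥ M *ᵥ v} := by
      rw [Metric.isOpen_iff]
      intro M hM
      obtain ⟨ε, hε, hq⟩ := quad_lower hM
      have hn' : (0:ℝ) < n := by exact_mod_cast hn
      refine ⟨ε / (2 * n), by positivity, fun M' hM' => ?_⟩
      intro v hv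
      have hDij : ∀ i j, |(M' - M : Mat n) i j| ≤ ε / (2 * n) := by
        intro i j
        have h1 : dist (M' i j) (M i j) ≤ dist M' M :=
          le_trans (dist_le_pi_dist (M' i) (M i) j) (dist_le_pi_dist M' M i)
        have h2 : dist M' M < ε / (2 * n) := hM'
        have : |(M' i j : ℝ) - M i j| = dist (M' i j) (M i j) := (Real.dist_eq _ _).symm
        rw [show (M' - M : Mat n) i j = M' i j - M i j from rfl, this]
        linarith
      have hper := quad_perturb hDij v
      have hsplit : v ⬝ᵥ M' *ᵥ v = v ⬝ᵥ M *ᵥ v + v ⬝ᵥ (M' - M : Mat n) *ᵥ v := by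
        have : (M' : Mat n) = M + (M' - M) := by ring
        conv_lhs => rw [this]
        exact (congrArg (v ⬝ᵥ ·) (Matrix.add_mulVec (M : Mat n) (M' - M) v)).trans
          (dotProduct_add _ _ _)
      have hcoef : ε / (2 * n) * n = ε / 2 := by field_simp
      have hdot : 0 < v ⬝ᵥ v := dot_self_pos hv
      have habs : |v ⬝ᵥ (M' - M : Mat n) *ᵥ v| ≤ ε / 2 * (v ⬝ᵥ v) := by
        calc |v ⬝ᵥ (M' - M : Mat n) *ᵥ v| ≤ ε / (2 * n) * n * (v ⬝ᵥ v) := hper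
          _ = ε / 2 * (v ⬝ᵥ v) := by rw [hcoef]
      have hlow := hq v
      have := abs_le.mp habs
      rw [hsplit]
      nlinarith
    exact key

lemma convex_Q : Convex ℝ {M : Mat n | ∀ v : Fin n → ℝ, v ≠ 0 → 0 < v ⬝ᵥ M *ᵥ v} := by
  intro P hP R hR a c ha hc hac
  intro v hv
  have h1 : v ⬝ᵥ (a • P + c • R) *ᵥ v = a * (v ⬝ᵥ P *ᵥ v) + c * (v ⬝ᵥ R *ᵥ v) := by
    simp [Matrix.add_mulVec, Matrix.smul_mulVec, dotProduct_add, dotProduct_smul,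
      smul_eq_mul]
  rw [h1]
  rcases ha.eq_or_lt with rfl | ha'
  · simp only [zero_mul, zero_add]
    have hc1 : c = 1 := by linarith
    subst hc1; simpa using hR v hv
  · rcases hc.eq_or_lt with rfl | hc'
    · have ha1 : a = 1 := by linarith
      subst ha1; simpa using hP v hv
    · have := hP v hv; have := hR v hv; positivity

lemma quad_vecMulVec (X : Mat n) (v : Fin n → ℝ) :
    ip X (vecMulVec v v) = v ⬝ᵥ X *ᵥ v := by
  simp only [ip, Matrix.vecMulVec_apply, dotProduct, Matrix.mulVec, Finset.mul_sum]
  refine Finset.sum_congr rfl fun i _ => Finset.sum_congr rfl fun j _ => by ring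

lemma psd_vecMulVec (v : Fin n → ℝ) : (vecMulVec v v).PosSemidef := by
  refine Matrix.PosSemidef.of_dotProduct_mulVec_nonneg ?_ ?_
  · ext i j
    simp [Matrix.conjTranspose_apply, Matrix.vecMulVec_apply, mul_comm]
  · intro x
    have h1 : star x ⬝ᵥ (vecMulVec v v) *ᵥ x = (x ⬝ᵥ v) * (v ⬝ᵥ x) := by
      simp only [star_trivial, dotProduct, Matrix.mulVec, Matrix.vecMulVec_apply,
        Finset.mul_sum, Finset.sum_mul]
      refine Finset.sum_congr rfl fun i _ => Finset.sum_congr rfl fun j _ => by ring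
    rw [h1, dotProduct_comm]
    exact mul_self_nonneg _

lemma isSymm_of_hermitian {M : Mat n} (h : M.IsHermitian) : M.IsSymm := by
  rw [Matrix.IsSymm, ← Matrix.conjTranspose_eq_transpose_of_trivial]
  exact h

lemma hermitian_of_isSymm {M : Mat n} (h : M.IsSymm) : M.IsHermitian := by
  rw [Matrix.IsHermitian, Matrix.conjTranspose_eq_transpose_of_trivial]
  exact h

lemma diag_quad (X : Mat n) (i : Fin n) :
    (Pi.single i 1 : Fin n → ℝ) ⬝ᵥ X *ᵥ (Pi.single i 1) = X i i := by
  simp [dotProduct, Matrix.mulVec, Pi.single_apply, Finset.mul_sum, mul_ite, ite_mul]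

lemma diag_nonneg_psd {X : Mat n} (hX : X.PosSemidef) (i : Fin n) : 0 ≤ X i i := by
  have := psd_quad hX (Pi.single i 1)
  rwa [diag_quad] at this

lemma trace_nonneg_psd {X : Mat n} (hX : X.PosSemidef) : 0 ≤ X.trace :=
  Finset.sum_nonneg fun i _ => diag_nonneg_psd hX i

lemma pair_quad {X : Mat n} (i j : Fin n) (hij : i ≠ j) (a c : ℝ) :
    ((Pi.single i a + Pi.single j c : Fin n → ℝ)) ⬝ᵥ X *ᵥ (Pi.single i a + Pi.single j c)
      = a * a * X i i + a * c * X i j + c * a * X j i + c * c * X j j := by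
  simp only [dotProduct, Matrix.mulVec, Pi.add_apply, Pi.single_apply, add_mul, mul_add,
    Finset.sum_add_distrib, mul_ite, ite_mul, mul_zero, zero_mul, mul_one, one_mul,
    Finset.sum_ite_eq', Finset.mem_univ, if_true]
  ring

lemma entry_abs_le_trace {X : Mat n} (hX : X.PosSemidef) (i j : Fin n) :
    |X i j| ≤ X.trace := by
  have hsym : X j i = X i j := by
    have := congrFun (congrFun (isSymm_of_hermitian hX.1) i) j
    simpa [Matrix.transpose_apply] using this
  have hii := diag_nonneg_psd hX i
  have hjj := diag_nonneg_psd hX j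
  have htri : X i i ≤ X.trace := Finset.single_le_sum
    (f := fun k => X k k) (fun k _ => diag_nonneg_psd hX k) (Finset.mem_univ i)
  have htrj : X j j ≤ X.trace := Finset.single_le_sum
    (f := fun k => X k k) (fun k _ => diag_nonneg_psd hX k) (Finset.mem_univ j)
  rcases eq_or_ne i j with rfl | hij
  · rw [abs_of_nonneg hii]; exact htri
  · have h1 := psd_quad hX (Pi.single i 1 + Pi.single j 1)
    have h2 := psd_quad hX (Pi.single i 1 + Pi.single j (-1))
    rw [pair_quad i j hij] at h1 h2
    rw [abs_le]
    constructor <;> nlinarith [hsym]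

lemma psd_smul {X : Mat n} (hX : X.PosSemidef) {c : ℝ} (hc : 0 ≤ c) :
    (c • X).PosSemidef := by
  refine Matrix.PosSemidef.of_dotProduct_mulVec_nonneg ?_ (fun x => ?_)
  · rw [Matrix.IsHermitian, Matrix.conjTranspose_smul, star_trivial, hX.1.eq]
  · have h1 : star x ⬝ᵥ (c • X) *ᵥ x = c * (star x ⬝ᵥ X *ᵥ x) := by
      rw [Matrix.smul_mulVec, dotProduct_smul, smul_eq_mul]
    rw [h1]
    exact mul_nonneg hc (hX.dotProduct_mulVec_nonneg x)

/-- `X ↦ v ⬝ᵥ X *ᵥ v` as a linear map. -/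
def qfl (v : Fin n → ℝ) : Mat n →ₗ[ℝ] ℝ where
  toFun X := v ⬝ᵥ X *ᵥ v
  map_add' X Y := by rw [Matrix.add_mulVec, dotProduct_add]
  map_smul' c X := by
    rw [Matrix.smul_mulVec, dotProduct_smul, smul_eq_mul, RingHom.id_apply, smul_eq_mul]

lemma cont_ip (Aa : Mat n) : Continuous fun X : Mat n => ip Aa X :=
  (ipl Aa).continuous_of_finiteDimensional

lemma isClosed_psd : IsClosed {X : Mat n | X.PosSemidef} := by
  have heq : {X : Mat n | X.PosSemidef}
      = ((fun X : Mat n => Xᴴ - X) ⁻¹' {0})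
        ∩ ⋂ v : Fin n → ℝ, (fun X : Mat n => v ⬝ᵥ X *ᵥ v) ⁻¹' (Set.Ici 0) := by
    ext X
    simp only [Set.mem_inter_iff, Set.mem_preimage, Set.mem_singleton_iff, Set.mem_iInter,
      Set.mem_Ici, Set.mem_setOf_eq, sub_eq_zero]
    constructor
    · exact fun hX => ⟨hX.1.eq, fun v => psd_quad hX v⟩
    · rintro ⟨h1, h2⟩
      exact Matrix.PosSemidef.of_dotProduct_mulVec_nonneg h1 fun v => by simpa using h2 v
  rw [heq]
  refine IsClosed.inter ?_ (isClosed_iInter fun v => ?_)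
  · exact isClosed_singleton.preimage ((continuous_id.matrix_conjTranspose).sub continuous_id)
  · exact isClosed_Ici.preimage (qfl v).continuous_of_finiteDimensional

lemma forall_le_linear {c d u : ℝ} (h : ∀ t : ℝ, u ≤ t * c + d) : c = 0 := by
  by_contra hc
  have h2 := h ((u - d - 1)/c)
  rw [div_mul_cancel₀ _ hc] at h2
  linarith

end SDPAux

/-- Feasible set of the dual SDP `inf{A₀ • X : A_k • X = b_k, X ∈ S^n_+}`. -/
def dualFeas {n m : ℕ} (A : Fin m → Mat n) (b : Fin m → ℝ) : Set (Mat n) :=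
  {X | X.PosSemidef ∧ ∀ k, ip (A k) X = b k}

/-- Objective values of the dual SDP. -/
def dualVals {n m : ℕ} (A₀ : Mat n) (A : Fin m → Mat n) (b : Fin m → ℝ) : Set ℝ :=
  {v | ∃ X ∈ dualFeas A b, v = ip A₀ X}

/-- Set of optimal solutions of the dual SDP. -/
def dualOpt {n m : ℕ} (A₀ : Mat n) (A : Fin m → Mat n) (b : Fin m → ℝ) : Set (Mat n) :=
  {X ∈ dualFeas A b | ip A₀ X = sInf (dualVals A₀ A b)}

/-- Objective values of the primal SDP `sup{bᵀy : A₀ - ∑ y_k A_k ∈ S^n_+}`. -/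
def primalVals {n m : ℕ} (A₀ : Mat n) (A : Fin m → Mat n) (b : Fin m → ℝ) : Set ℝ :=
  {v | ∃ y : Fin m → ℝ, (A₀ - ∑ k, y k • A k).PosSemidef ∧ v = ∑ k, b k * y k}

open SDPAux

/-- If the primal SDP is strictly feasible and the dual SDP is feasible, then
the set of dual optimal solutions is nonempty and compact, and the primal and
dual optimal values coincide. No linear independence of the `A_k` is assumed. -/
theorem dual_opt_nonempty_compact_and_strong_duality (n m : ℕ)
    (A₀ : Mat n) (A : Fin m → Mat n) (b : Fin m → ℝ)
    (hA₀ : A₀.IsSymm) (hA : ∀ k, (A k).IsSymm)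
    (hPstrict : ∃ y : Fin m → ℝ, (A₀ - ∑ k, y k • A k).PosDef)
    (hDfeas : (dualFeas A b).Nonempty) :
    (dualOpt A₀ A b).Nonempty ∧ IsCompact (dualOpt A₀ A b) ∧
      sSup (primalVals A₀ A b) = sInf (dualVals A₀ A b) := by
  classical
  obtain ⟨y₀, hy₀⟩ := hPstrict
  obtain ⟨X₀, hX₀⟩ := hDfeas
  -- symmetry of affine combinations
  have hsymA : ∀ y : Fin m → ℝ, (A₀ - ∑ k, y k • A k).IsSymm := by
    intro y
    show (A₀ - ∑ k, y k • A k)ᵀ = _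
    rw [Matrix.transpose_sub, hA₀, Matrix.transpose_sum]
    congr 1
    exact Finset.sum_congr rfl fun k _ => by rw [Matrix.transpose_smul, hA k]
  -- weak duality
  have weak : ∀ w ∈ primalVals A₀ A b, ∀ v ∈ dualVals A₀ A b, w ≤ v := by
    rintro w ⟨y, hy, rfl⟩ v ⟨X, ⟨hX, hXk⟩, rfl⟩
    have h0 : 0 ≤ ip (A₀ - ∑ k, y k • A k) X := ip_nonneg hy hX
    have h1 : ip (A₀ - ∑ k, y k • A k) X = ip A₀ X - ∑ k, b k * y k := by
      rw [ip_comm, ip_sub_right, ip_sum_right, ip_comm X A₀]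
      congr 1
      exact Finset.sum_congr rfl fun k _ => by
        rw [ip_smul_right, ip_comm, hXk k, mul_comm]
    rw [h1] at h0
    linarith
  have hPne : (primalVals A₀ A b).Nonempty :=
    ⟨∑ k, b k * y₀ k, y₀, hy₀.posSemidef, rfl⟩
  have hDne : (dualVals A₀ A b).Nonempty := ⟨ip A₀ X₀, X₀, hX₀, rfl⟩
  have hPbdd : BddAbove (primalVals A₀ A b) :=
    ⟨ip A₀ X₀, fun w hw => weak w hw _ ⟨X₀, hX₀, rfl⟩⟩
  have hDbdd : BddBelow (dualVals A₀ A b) :=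
    ⟨∑ k, b k * y₀ k, fun v hv => weak _ ⟨y₀, hy₀.posSemidef, rfl⟩ v hv⟩
  set pstar : ℝ := sSup (primalVals A₀ A b) with hpstar
  -- separation
  set Qset : Set (Mat n) := {M : Mat n | ∀ v : Fin n → ℝ, v ≠ 0 → 0 < v ⬝ᵥ M *ᵥ v}
    with hQdef
  set Oset : Set (ℝ × Mat n) := (Set.Ioi pstar) ×ˢ Qset with hOdef
  set Lset : Set (ℝ × Mat n) :=
    Set.range (fun y : Fin m → ℝ => ((∑ k, b k * y k : ℝ), A₀ - ∑ k, y k • A k))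
    with hLdef
  have hOopen : IsOpen Oset := isOpen_Ioi.prod isOpen_Q
  have hOconv : Convex ℝ Oset := (convex_Ioi pstar).prod convex_Q
  have hLconv : Convex ℝ Lset := by
    rintro p ⟨y1, rfl⟩ q ⟨y2, rfl⟩ a c ha hc hac
    refine ⟨a • y1 + c • y2, ?_⟩
    have hfst : ∑ k, b k * (a • y1 + c • y2) k
        = a * (∑ k, b k * y1 k) + c * (∑ k, b k * y2 k) := by
      rw [Finset.mul_sum, Finset.mul_sum, ← Finset.sum_add_distrib]
      exact Finset.sum_congr rfl fun k _ => by
        simp [Pi.add_apply, Pi.smul_apply, smul_eq_mul]; ring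
    have hsnd : (∑ k, ((a • y1 + c • y2) k) • A k)
        = a • (∑ k, y1 k • A k) + c • (∑ k, y2 k • A k) := by
      rw [Finset.smul_sum, Finset.smul_sum, ← Finset.sum_add_distrib]
      refine Finset.sum_congr rfl fun k _ => ?_
      simp only [Pi.add_apply, Pi.smul_apply, smul_eq_mul]
      rw [add_smul, smul_smul, smul_smul]
    have hsnd2 : A₀ - ∑ k, ((a • y1 + c • y2) k) • A k
        = a • (A₀ - ∑ k, y1 k • A k) + c • (A₀ - ∑ k, y2 k • A k) := by
      have h5 : a • A₀ + c • A₀ = A₀ := by rw [← add_smul, hac, one_smul]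
      rw [hsnd, smul_sub, smul_sub, sub_add_sub_comm, h5]
    ext
    · simp only [Prod.fst_add, Prod.smul_fst, smul_eq_mul]
      exact hfst
    · simp only [Prod.snd_add, Prod.smul_snd]
      exact congrFun (congrFun hsnd2 _) _
  have hdisj : Disjoint Oset Lset := by
    rw [Set.disjoint_left]
    rintro p hpO ⟨y, rfl⟩
    rw [hOdef, Set.mem_prod] at hpO
    obtain ⟨hp1, hp2⟩ := hpO
    have hMpd : (A₀ - ∑ k, y k • A k).PosDef := by
      refine Matrix.PosDef.of_dotProduct_mulVec_pos (hermitian_of_isSymm (hsymA y)) fun x hx => ?_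
      simpa using hp2 x hx
    have hmem : (∑ k, b k * y k) ∈ primalVals A₀ A b := ⟨y, hMpd.posSemidef, rfl⟩
    have := le_csSup hPbdd hmem
    exact absurd hp1 (by simpa using not_lt.mpr this)
  obtain ⟨f, u, hfO, hfL⟩ := geometric_hahn_banach_open hOconv hOopen hLconv hdisj
  set α : ℝ := f (1, 0) with hα
  set gL : Mat n →ₗ[ℝ] ℝ := f.toLinearMap.comp (LinearMap.inr ℝ ℝ (Mat n)) with hgL
  have hf : ∀ (r : ℝ) (M : Mat n), f (r, M) = r * α + gL M := by
    intro r M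
    have h : (r, M) = r • ((1:ℝ), (0:Mat n)) + ((0:ℝ), M) := by
      simp [Prod.ext_iff]
    rw [h, map_add, _root_.map_smul, smul_eq_mul]
    rfl
  have hO' : ∀ r, pstar < r → ∀ M ∈ Qset, r * α + gL M < u := by
    intro r hr M hM
    have := hfO (r, M) (by rw [hOdef, Set.mem_prod]; exact ⟨hr, hM⟩)
    rwa [hf] at this
  have hL' : ∀ y : Fin m → ℝ,
      u ≤ (∑ k, b k * y k) * α + gL (A₀ - ∑ k, y k • A k) := by
    intro y
    have := hfL _ ⟨y, rfl⟩
    rwa [hf] at this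
  have h1Q : (1 : Mat n) ∈ Qset := by
    intro v hv
    rw [Matrix.one_mulVec]
    exact dot_self_pos hv
  have hsmul1Q : ∀ ε : ℝ, 0 < ε → (ε • (1 : Mat n)) ∈ Qset := by
    intro ε hε v hv
    rw [Matrix.smul_mulVec, Matrix.one_mulVec, dotProduct_smul, smul_eq_mul]
    exact mul_pos hε (dot_self_pos hv)
  -- α ≤ 0
  have hαle : α ≤ 0 := by
    by_contra hcon
    push_neg at hcon
    set r : ℝ := max (pstar + 1) ((u - gL 1)/α + 1) with hr
    have hr1 : pstar < r := lt_of_lt_of_le (lt_add_one _) (le_max_left _ _)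
    have hr2 : (u - gL 1)/α + 1 ≤ r := le_max_right _ _
    have h1 := hO' r hr1 1 h1Q
    have h2 : ((u - gL 1)/α + 1) * α ≤ r * α :=
      mul_le_mul_of_nonneg_right hr2 hcon.le
    have hda : (u - gL 1)/α * α = u - gL 1 := div_mul_cancel₀ _ (ne_of_gt hcon)
    nlinarith
  -- gL nonpositive on PSD matrices
  have hgpsd : ∀ N : Mat n, N.PosSemidef → gL N ≤ 0 := by
    intro N hN
    by_contra hcon
    push_neg at hcon
    have key : ∀ t : ℝ, 0 < t → (pstar + 1) * α + (t * gL N + gL 1) < u := by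
      intro t ht
      have hmem : t • N + 1 ∈ Qset := by
        intro v hv
        rw [Matrix.add_mulVec, dotProduct_add, Matrix.smul_mulVec,
          dotProduct_smul, smul_eq_mul, Matrix.one_mulVec]
        have h1 := psd_quad hN v
        have h2 := dot_self_pos hv
        nlinarith
      have := hO' (pstar + 1) (lt_add_one _) _ hmem
      rwa [map_add, _root_.map_smul, smul_eq_mul] at this
    set c : ℝ := u - (pstar + 1) * α - gL 1 with hc
    have h1 := key ((|c| + 1)/gL N) (by positivity)
    rw [div_mul_cancel₀ _ (ne_of_gt hcon)] at h1
    have := le_abs_self c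
    simp only [hc] at this h1
    linarith
  -- pstar * α ≤ u
  have hup : pstar * α ≤ u := by
    by_contra hcon
    push_neg at hcon
    set cc : ℝ := |α| + |gL 1| + 1 with hcc
    have hccpos : 0 < cc := by positivity
    set δ : ℝ := (pstar * α - u)/cc with hδ
    have hδpos : 0 < δ := div_pos (by linarith) hccpos
    have h1 := hO' (pstar + δ) (by linarith) _ (hsmul1Q δ hδpos)
    rw [_root_.map_smul, smul_eq_mul] at h1
    have hδc : δ * cc = pstar * α - u := div_mul_cancel₀ _ (ne_of_gt hccpos)
    nlinarith [neg_abs_le α, le_abs_self α, neg_abs_le (gL 1), le_abs_self (gL 1)]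
  -- linear expansion of gL over the affine family
  have hexp : ∀ y : Fin m → ℝ,
      gL (A₀ - ∑ k, y k • A k) = gL A₀ - ∑ k, y k * gL (A k) := by
    intro y
    rw [map_sub, map_sum]
    congr 1
    exact Finset.sum_congr rfl fun k _ => by rw [_root_.map_smul, smul_eq_mul]
  -- coefficient identities
  have hcoef : ∀ k, b k * α - gL (A k) = 0 := by
    intro k
    apply forall_le_linear (d := gL A₀) (u := u)
    intro t
    have h1 := hL' (fun j => t * (Pi.single k 1 : Fin m → ℝ) j)
    rw [hexp] at h1
    have h2 : ∑ j, b j * (t * (Pi.single k 1 : Fin m → ℝ) j) = t * b k := by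
      simp [Pi.single_apply, mul_ite, Finset.mul_sum, mul_comm]
    have h3 : ∑ j, (t * (Pi.single k 1 : Fin m → ℝ) j) * gL (A j) = t * gL (A k) := by
      simp [Pi.single_apply, ite_mul, Finset.sum_ite_eq']
    rw [h2, h3] at h1
    calc u ≤ t * b k * α + (gL A₀ - t * gL (A k)) := h1
      _ = t * (b k * α - gL (A k)) + gL A₀ := by ring
  have hu0 : u ≤ gL A₀ := by
    have h1 := hL' (fun _ => 0)
    simpa using h1
  -- build the dual matrix
  set C : Mat n := Matrix.of fun i j => gL (Matrix.single i j 1) with hC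
  have hgC : ∀ M : Mat n, gL M = ∑ i, ∑ j, C i j * M i j := by
    intro M
    conv_lhs => rw [matrix_eq_sum_single M]
    rw [map_sum]
    refine Finset.sum_congr rfl fun i _ => ?_
    rw [map_sum]
    refine Finset.sum_congr rfl fun j _ => ?_
    have : Matrix.single i j (M i j) = (M i j) • Matrix.single i j 1 := by
      rw [Matrix.smul_single, smul_eq_mul, mul_one]
    rw [this, _root_.map_smul, smul_eq_mul]
    exact mul_comm _ _
  set X : Mat n := Matrix.of fun i j => -(1/2) * (C i j + C j i) with hX
  have hXsymm : X.IsSymm := by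
    show Xᵀ = X
    ext i j
    simp only [Matrix.transpose_apply, hX, Matrix.of_apply]
    ring
  have hXip : ∀ M : Mat n, M.IsSymm → ip X M = -gL M := by
    intro M hM
    have hMs : ∀ i j, M j i = M i j := by
      intro i j
      exact congrFun (congrFun hM i) j
    have hswap : ∑ i, ∑ j, C j i * M i j = ∑ i, ∑ j, C i j * M i j := by
      calc ∑ i, ∑ j, C j i * M i j = ∑ j, ∑ i, C j i * M i j := Finset.sum_comm
        _ = ∑ i, ∑ j, C i j * M i j := by
            refine Finset.sum_congr rfl fun i _ => Finset.sum_congr rfl fun j _ => ?_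
            rw [hMs i j]
    have h1 : ip X M = ∑ i, ∑ j,
        ((-(1/2)) * (C i j * M i j) + (-(1/2)) * (C j i * M i j)) := by
      refine Finset.sum_congr rfl fun i _ => Finset.sum_congr rfl fun j _ => ?_
      simp only [hX, Matrix.of_apply]
      ring
    rw [h1]
    have h2 : ∀ i, ∑ j, ((-(1/2)) * (C i j * M i j) + (-(1/2)) * (C j i * M i j))
        = (-(1/2)) * (∑ j, C i j * M i j) + (-(1/2)) * (∑ j, C j i * M i j) := by
      intro i
      rw [Finset.sum_add_distrib, Finset.mul_sum, Finset.mul_sum]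
    rw [Finset.sum_congr rfl fun i _ => h2 i, Finset.sum_add_distrib,
      ← Finset.mul_sum, ← Finset.mul_sum, hswap, hgC M]
    ring
  have hXpsd : X.PosSemidef := by
    refine Matrix.PosSemidef.of_dotProduct_mulVec_nonneg (hermitian_of_isSymm hXsymm) fun v => ?_
    have h1 : ip X (vecMulVec v v) = -gL (vecMulVec v v) :=
      hXip _ (isSymm_of_hermitian (psd_vecMulVec v).1)
    have h2 := hgpsd _ (psd_vecMulVec v)
    have h3 := quad_vecMulVec X v
    simp only [star_trivial]
    rw [← h3, h1]
    linarith
  -- α is strictly negative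
  have hαneg : α < 0 := by
    rcases lt_or_eq_of_le hαle with h | h
    · exact h
    · exfalso
      have hM₀Q : (A₀ - ∑ k, y₀ k • A k) ∈ Qset := fun v hv => posdef_quad hy₀ hv
      have h1 := hO' (pstar + 1) (lt_add_one _) _ hM₀Q
      have h2 := hL' y₀
      rw [h] at h1 h2
      simp only [mul_zero, zero_add] at h1 h2
      linarith
  -- the dual optimal solution
  set Xstar : Mat n := (-α)⁻¹ • X with hXstar
  have hαinv : 0 < (-α)⁻¹ := inv_pos.mpr (by linarith)
  have hXstarPsd : Xstar.PosSemidef := psd_smul hXpsd hαinv.le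
  have hfeask : ∀ k, ip (A k) Xstar = b k := by
    intro k
    have h1 : ip (A k) X = -(b k * α) := by
      rw [ip_comm, hXip _ (hA k)]
      have := hcoef k
      linarith
    rw [hXstar, ip_smul_right, h1]
    have hα0 : α ≠ 0 := ne_of_lt hαneg
    field_simp
  have hXstarFeas : Xstar ∈ dualFeas A b := ⟨hXstarPsd, hfeask⟩
  have hvalmem : ip A₀ Xstar ∈ dualVals A₀ A b := ⟨Xstar, hXstarFeas, rfl⟩
  have hval : ip A₀ Xstar ≤ pstar := by
    have h1 : ip A₀ X = -gL A₀ := by rw [ip_comm, hXip _ hA₀]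
    have h2 : ip A₀ X ≤ -(pstar * α) := by rw [h1]; linarith
    rw [hXstar, ip_smul_right]
    calc (-α)⁻¹ * ip A₀ X ≤ (-α)⁻¹ * (-(pstar * α)) :=
          mul_le_mul_of_nonneg_left h2 hαinv.le
      _ = pstar := by
          have hα0 : α ≠ 0 := ne_of_lt hαneg
          field_simp
  have hlege : pstar ≤ sInf (dualVals A₀ A b) :=
    le_csInf hDne fun v hv => csSup_le hPne fun w hw => weak w hw v hv
  have hinfle : sInf (dualVals A₀ A b) ≤ ip A₀ Xstar := csInf_le hDbdd hvalmem
  have hstrong : sSup (primalVals A₀ A b) = sInf (dualVals A₀ A b) := by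
    rw [← hpstar]
    linarith
  have hXstarOpt : Xstar ∈ dualOpt A₀ A b := ⟨hXstarFeas, by rw [← hstrong, ← hpstar]; linarith⟩
  refine ⟨⟨Xstar, hXstarOpt⟩, ?_, hstrong⟩
  -- compactness
  have hclosed : IsClosed (dualOpt A₀ A b) := by
    have heq : dualOpt A₀ A b = {Y : Mat n | Y.PosSemidef}
        ∩ ((⋂ k, (fun Y : Mat n => ip (A k) Y) ⁻¹' {b k})
          ∩ (fun Y : Mat n => ip A₀ Y) ⁻¹' {sInf (dualVals A₀ A b)}) := by
      ext Y
      simp only [dualOpt, dualFeas, Set.mem_setOf_eq, Set.mem_sep_iff, Set.mem_inter_iff,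
        Set.mem_iInter, Set.mem_preimage, Set.mem_singleton_iff]
      tauto
    rw [heq]
    refine isClosed_psd.inter (IsClosed.inter (isClosed_iInter fun k => ?_) ?_)
    · exact isClosed_singleton.preimage (cont_ip (A k))
    · exact isClosed_singleton.preimage (cont_ip A₀)
  obtain ⟨ε, hε, hq⟩ :=
    quad_lower (M := A₀ - ∑ k, y₀ k • A k) (fun v hv => posdef_quad hy₀ hv)
  set c₀ : ℝ := sInf (dualVals A₀ A b) - ∑ k, b k * y₀ k with hc₀
  have htr : ∀ Y ∈ dualOpt A₀ A b, Y.trace ≤ c₀ / ε := by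
    rintro Y ⟨⟨hY, hYk⟩, hYval⟩
    have h1 : ip (A₀ - ∑ k, y₀ k • A k) Y = ip A₀ Y - ∑ k, b k * y₀ k := by
      rw [ip_comm, ip_sub_right, ip_sum_right, ip_comm Y A₀]
      congr 1
      exact Finset.sum_congr rfl fun k _ => by
        rw [ip_smul_right, ip_comm, hYk k, mul_comm]
    have h2 := ip_ge_of_quad hq hY
    rw [h1, hYval] at h2
    rw [le_div_iff₀ hε]
    calc Y.trace * ε = ε * Y.trace := mul_comm _ _
      _ ≤ c₀ := by rw [hc₀]; linarith
  set R : ℝ := max (c₀ / ε) 0 with hR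
  have hRnn : (0:ℝ) ≤ R := le_max_right _ _
  have hbdd : Bornology.IsBounded (α := Fin n → Fin n → ℝ) (dualOpt A₀ A b) := by
    refine (Metric.isBounded_iff_subset_closedBall (α := Fin n → Fin n → ℝ)
      (0 : Fin n → Fin n → ℝ)).mpr ?_
    refine ⟨R, fun Y hY => ?_⟩
    obtain ⟨⟨hYpsd, -⟩, -⟩ := id hY
    have hent : ∀ i j, |(Y : Mat n) i j| ≤ R := fun i j =>
      le_trans (le_trans (entry_abs_le_trace hYpsd i j) (htr Y hY)) (le_max_left _ _)
    rw [Metric.mem_closedBall, dist_zero_right,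
      pi_norm_le_iff_of_nonneg hRnn]
    intro i
    rw [pi_norm_le_iff_of_nonneg hRnn]
    intro j
    rw [Real.norm_eq_abs]
    exact hent i j
  exact Metric.isCompact_of_isClosed_isBounded (α := Fin n → Fin n → ℝ) hclosed hbdd
end
end

section
/- If the primal and dual SDPs both have strictly feasible points, then the image of the primal optimal solution set under the projection (y, Z) ↦ Z is bounded, even though the set of optimal (y, Z) pairs may be unbounded. -/
open Matrix Set

noncomputable section

/-- Frobenius norm. -/
def frobNorm {n : ℕ} (X : Mat n) : ℝ := Real.sqrt (∑ i, ∑ j, (X i j) ^ 2)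

lemma psd_diag_nonneg {n : ℕ} {Z : Mat n} (hZ : Z.PosSemidef) (i : Fin n) : 0 ≤ Z i i := by
  have := hZ.dotProduct_mulVec_nonneg (Pi.single i 1)
  simpa [dotProduct_single] using this

lemma psd_symm {n : ℕ} {Z : Mat n} (hZ : Z.PosSemidef) (i j : Fin n) : Z j i = Z i j :=
  hZ.1.apply i j

lemma ip_eq_trace {n : ℕ} (Z W : Mat n) (hW : ∀ i j, W j i = W i j) :
    ip Z W = (Z * W).trace := by
  simp only [ip, Matrix.trace, Matrix.diag, Matrix.mul_apply]
  exact Finset.sum_congr rfl fun i _ => Finset.sum_congr rfl fun j _ => by rw [hW i j]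

lemma ip_nonneg {n : ℕ} {Z W : Mat n} (hZ : Z.PosSemidef) (hW : W.PosSemidef) :
    0 ≤ ip Z W := by
  obtain ⟨B, hB⟩ : ∃ B : Mat n, W = Bᴴ * B := by
    open scoped MatrixOrder in
    exact CStarAlgebra.nonneg_iff_eq_star_mul_self.mp hW.nonneg
  rw [ip_eq_trace Z W (psd_symm hW), hB, ← Matrix.mul_assoc, Matrix.trace_mul_cycle]
  exact Finset.sum_nonneg fun i _ => psd_diag_nonneg (hZ.mul_mul_conjTranspose_same B) i

lemma posdef_sub_smul {n : ℕ} {X : Mat n} (hX : X.PosDef) :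
    ∃ ε : ℝ, 0 < ε ∧ (X - ε • 1).PosSemidef := by
  rcases isEmpty_or_nonempty (Fin n) with h | h
  · refine ⟨1, one_pos, Matrix.ext fun i _ => isEmptyElim i, fun x => ?_⟩
    simp [dotProduct, Finset.univ_eq_empty, Subsingleton.elim x 0]
  · classical
    have hH := hX.1
    set ε := Finset.univ.inf' Finset.univ_nonempty hH.eigenvalues with hε
    have hεpos : 0 < ε := by
      rw [hε, Finset.lt_inf'_iff]
      exact fun i _ => hX.eigenvalues_pos i
    have hU : (hH.eigenvectorUnitary : Mat n) * star (hH.eigenvectorUnitary : Mat n) = 1 :=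
      (Matrix.mem_unitaryGroup_iff).mp hH.eigenvectorUnitary.2
    have key : X - ε • 1 = (hH.eigenvectorUnitary : Mat n) *
        Matrix.diagonal (fun i => hH.eigenvalues i - ε) *
        star (hH.eigenvectorUnitary : Mat n) := by
      have h1 : ε • (1 : Mat n) = (hH.eigenvectorUnitary : Mat n) *
          Matrix.diagonal (fun _ => ε) * star (hH.eigenvectorUnitary : Mat n) := by
        have : Matrix.diagonal (fun _ : Fin n => ε) = ε • (1 : Mat n) := by
          rw [← Matrix.diagonal_one, Matrix.smul_eq_diagonal_mul]
          simp [Matrix.diagonal_mul_diagonal]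
        rw [this, Matrix.mul_smul, Matrix.smul_mul, Matrix.mul_one, hU]
      conv_lhs => rw [hH.spectral_theorem, Unitary.conjStarAlgAut_apply, h1]
      rw [← Matrix.sub_mul, ← Matrix.mul_sub, Matrix.diagonal_sub]
      simp [Function.comp]
    refine ⟨ε, hεpos, ?_⟩
    rw [key]
    exact (Matrix.posSemidef_diagonal_iff.mpr fun i =>
      sub_nonneg.2 (Finset.inf'_le _ (Finset.mem_univ i))).mul_mul_conjTranspose_same _

lemma entry_sq_le {n : ℕ} {Z : Mat n} (hZ : Z.PosSemidef) (i j : Fin n) :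
    Z i j ^ 2 ≤ Z i i * Z j j := by
  by_cases hij : i = j
  · subst hij; rw [sq]
  have hsym : Z j i = Z i j := hZ.1.apply i j
  have h : ∀ t : ℝ, 0 ≤ Z j j * (t * t) + (2 * Z i j) * t + Z i i := by
    intro t
    have h0 := hZ.dotProduct_mulVec_nonneg ((Pi.single i 1 : Fin n → ℝ) + t • (Pi.single j 1 : Fin n → ℝ))
    simp only [star_trivial, Matrix.mulVec_add, Matrix.mulVec_smul,
      Matrix.mulVec_single, dotProduct_add, add_dotProduct,
      smul_dotProduct, dotProduct_smul, single_dotProduct,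
      smul_eq_mul, mul_one, Matrix.col_apply, op_smul_eq_mul, one_mul] at h0
    rw [hsym] at h0
    nlinarith [h0]
  have hd := discrim_le_zero h
  simp only [discrim] at hd
  nlinarith [hd]

lemma frob_le_trace {n : ℕ} {Z : Mat n} (hZ : Z.PosSemidef) :
    frobNorm Z ≤ ∑ i, Z i i := by
  have htr : 0 ≤ ∑ i, Z i i := Finset.sum_nonneg fun i _ => psd_diag_nonneg hZ i
  have hS : (∑ i, ∑ j, Z i j ^ 2) ≤ (∑ i, Z i i) ^ 2 := by
    rw [sq, Finset.sum_mul_sum]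
    exact Finset.sum_le_sum fun i _ => Finset.sum_le_sum fun j _ => entry_sq_le hZ i j
  calc frobNorm Z ≤ Real.sqrt ((∑ i, Z i i) ^ 2) := Real.sqrt_le_sqrt hS
    _ = ∑ i, Z i i := Real.sqrt_sq htr

lemma ip_sub_left {n : ℕ} (B C X : Mat n) : ip (B - C) X = ip B X - ip C X := by
  simp [ip, sub_mul, Finset.sum_sub_distrib]

lemma ip_sum_left {n : ℕ} {m : ℕ} (y : Fin m → ℝ) (A : Fin m → Mat n) (X : Mat n) :
    ip (∑ k, y k • A k) X = ∑ k, y k * ip (A k) X := by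
  have hadd : ∀ B C : Mat n, ip (B + C) X = ip B X + ip C X := by
    intro B C; simp [ip, add_mul, Finset.sum_add_distrib]
  have hmap := map_sum (AddMonoidHom.mk' (fun M : Mat n => ip M X) hadd)
    (fun k => y k • A k) Finset.univ
  refine hmap.trans (Finset.sum_congr rfl fun k _ => ?_)
  simp [ip, Finset.mul_sum, mul_assoc]

lemma ip_smul_one {n : ℕ} (Z : Mat n) (ε : ℝ) : ip Z (ε • 1) = ε * ∑ i, Z i i := by
  simp only [ip, Matrix.smul_apply, Matrix.one_apply, smul_eq_mul, mul_ite, mul_one, mul_zero]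
  rw [Finset.mul_sum]
  refine Finset.sum_congr rfl fun i _ => ?_
  rw [Finset.sum_ite_eq Finset.univ i (fun j => Z i j * ε)]
  simp [mul_comm]

/-- If both the primal SDP `sup{bᵀy : ∑ y_k A_k + Z = A₀, Z ∈ S^n_+}` and the dual
SDP `inf{A₀ • X : A_k • X = b_k, X ∈ S^n_+}` are strictly feasible, then the image
of the primal optimal solution set under the projection `(y, Z) ↦ Z` is bounded,
even though the set of optimal pairs `(y, Z)` may be unbounded. -/
theorem primal_opt_slack_bounded (n m : ℕ)
    (A₀ : Mat n) (A : Fin m → Mat n) (b : Fin m → ℝ)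
    (hA₀ : A₀.IsSymm) (hA : ∀ k, (A k).IsSymm)
    (hPstrict : ∃ y : Fin m → ℝ, (A₀ - ∑ k, y k • A k).PosDef)
    (hDstrict : ∃ X : Mat n, X.PosDef ∧ ∀ k, ip (A k) X = b k) :
    ∃ R : ℝ, ∀ Z : Mat n,
      (∃ y : Fin m → ℝ, (∑ k, y k • A k) + Z = A₀ ∧ Z.PosSemidef ∧
        (∑ k, b k * y k) = sSup (primalVals A₀ A b)) →
      frobNorm Z ≤ R := by
  obtain ⟨X, hX, hbX⟩ := hDstrict
  obtain ⟨ε, hεpos, hXe⟩ := posdef_sub_smul hX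
  obtain ⟨y₀, hy₀⟩ := hPstrict
  set S := primalVals A₀ A b with hSdef
  refine ⟨(ip A₀ X - sSup S) / ε, ?_⟩
  rintro Z ⟨y, hsum, hZ, hopt⟩
  have hZ' : Z = A₀ - ∑ k, y k • A k := eq_sub_of_add_eq' hsum
  -- weak duality style computation
  have hval : ∀ y' : Fin m → ℝ, ip (A₀ - ∑ k, y' k • A k) X = ip A₀ X - ∑ k, b k * y' k := by
    intro y'
    rw [ip_sub_left, ip_sum_left]
    congr 1
    exact Finset.sum_congr rfl fun k _ => by rw [hbX k, mul_comm]
  -- key identity at the optimum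
  have key : ip Z X = ip A₀ X - sSup S := by
    rw [hZ', hval y, hopt]
  have h0 : 0 ≤ ip Z (X - ε • 1) := ip_nonneg hZ hXe
  have hsplit : ip Z (X - ε • 1) = ip Z X - ε * ∑ i, Z i i := by
    have : ip Z (X - ε • 1) = ip Z X - ip Z (ε • 1) := by
      simp [ip, mul_sub, Finset.sum_sub_distrib]
    rw [this, ip_smul_one]
  have htr : ε * (∑ i, Z i i) ≤ ip A₀ X - sSup S := by
    rw [← key]; linarith [h0, hsplit.symm.le, hsplit.le]
  have htrace_le : (∑ i, Z i i) ≤ (ip A₀ X - sSup S) / ε := by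
    rw [le_div_iff₀ hεpos]; linarith [htr]
  calc frobNorm Z ≤ ∑ i, Z i i := frob_le_trace hZ
    _ ≤ (ip A₀ X - sSup S) / ε := htrace_le
end
end

section
/- Consider the 2×2 example with A₀ = [[0,0],[0,1]], A₁ = [[1,0],[0,0]], A₂ = A₃ = [[0,1],[1,0]], b = (2,2,2). Then the primal SDP sup{bᵀy : A₀ - Σ y_k A_k ∈ S²_+} and dual SDP inf{A₀ • X : A_k • X = b_k, X ∈ S²_+} are both strictly feasible (e.g., y = (-1,0,0) with slack the identity, and X = [[2,1],[1,1]]), yet replacing A₃ by A₃(t) = [[0,1+t],[1+t,0]] preserves rank⟨A₁,A₂,A₃(t)⟩ = rank⟨A₁,A₂,A₃⟩ while making the perturbed dual system A₁ • X = 2, A₂ • X = 2, A₃(t) • X = 2, X ∈ S²_+ infeasible for every t > 0. -/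
open Matrix Set

noncomputable section

def exA₀ : Mat 2 := !![0, 0; 0, 1]

/-- The constraint matrices `A₁, A₂, A₃(t)` of the example, with `A₃` perturbed. -/
def exA (t : ℝ) : Fin 3 → Mat 2 :=
  ![!![1, 0; 0, 0], !![0, 1; 1, 0], !![0, 1 + t; 1 + t, 0]]

lemma exA_range (t : ℝ) :
    Submodule.span ℝ (Set.range (exA t)) =
    Submodule.span ℝ ({!![1,0;0,0], !![(0:ℝ),1;1,0]} : Set (Mat 2)) := by
  have hr : Set.range (exA t) =
      {!![1,0;0,0], !![(0:ℝ),1;1,0], !![0,1+t;1+t,0]} := by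
    ext M
    simp only [exA, Matrix.range_cons, Matrix.range_empty, Set.union_empty,
      Set.mem_insert_iff, Set.mem_singleton_iff, Set.mem_union]
  rw [hr]
  apply le_antisymm
  · rw [Submodule.span_le]
    rintro x (rfl | rfl | rfl)
    · exact Submodule.subset_span (Or.inl rfl)
    · exact Submodule.subset_span (Or.inr rfl)
    · have : !![(0:ℝ),1+t;1+t,0] = (1+t) • !![(0:ℝ),1;1,0] := by
        ext i j; fin_cases i <;> fin_cases j <;> simp
      rw [this]
      exact Submodule.smul_mem _ _ (Submodule.subset_span (Or.inr rfl))
  · rw [Submodule.span_le]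
    rintro x (rfl | rfl)
    · exact Submodule.subset_span (Or.inl rfl)
    · exact Submodule.subset_span (Or.inr (Or.inl rfl))

/-- In the 2×2 example, the primal and dual SDPs are strictly feasible
(witnessed by `y = (-1,0,0)` with identity slack and `X = [[2,1],[1,1]]`), the
perturbation `A₃(t)` preserves the rank of the span of the constraint matrices,
yet the perturbed dual system is infeasible for every `t > 0`. -/
theorem perturbation_preserving_rank_can_destroy_feasibility :
    ((exA₀ - ∑ k, (![-1, 0, 0] : Fin 3 → ℝ) k • exA 0 k) = 1 ∧
      (exA₀ - ∑ k, (![-1, 0, 0] : Fin 3 → ℝ) k • exA 0 k).PosDef) ∧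
    ((!![2, 1; 1, 1] : Mat 2).PosDef ∧ ∀ k, ip (exA 0 k) (!![2, 1; 1, 1] : Mat 2) = 2) ∧
    (∀ t : ℝ, Module.finrank ℝ ↥(Submodule.span ℝ (Set.range (exA t))) =
      Module.finrank ℝ ↥(Submodule.span ℝ (Set.range (exA 0)))) ∧
    (∀ t : ℝ, 0 < t →
      ¬ ∃ X : Mat 2, X.PosSemidef ∧ ∀ k, ip (exA t k) X = 2) := by
  have h1 : (exA₀ - ∑ k, (![-1, 0, 0] : Fin 3 → ℝ) k • exA 0 k) = 1 := by
    simp [Fin.sum_univ_three, exA, exA₀]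
    ext i j
    fin_cases i <;> fin_cases j <;> simp [Matrix.one_apply]
  refine ⟨⟨h1, ?_⟩, ⟨?_, ?_⟩, ?_, ?_⟩
  · rw [h1]; exact Matrix.PosDef.one
  · rw [Matrix.posDef_iff_dotProduct_mulVec]
    constructor
    · ext i j; fin_cases i <;> fin_cases j <;> simp
    · intro x hx
      rw [Function.ne_iff] at hx
      have hq : star x ⬝ᵥ (!![2, 1; 1, 1] : Mat 2) *ᵥ x =
          (x 0) ^ 2 + (x 0 + x 1) ^ 2 := by
        simp [dotProduct, Matrix.mulVec, Fin.sum_univ_two]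
        ring
      rw [hq]
      obtain ⟨i, hi⟩ := hx
      have h0 : x 0 ≠ 0 ∨ x 0 + x 1 ≠ 0 := by
        fin_cases i <;> simp at hi
        · exact Or.inl hi
        · rcases eq_or_ne (x 0) 0 with h | h
          · exact Or.inr (by rw [h]; simpa)
          · exact Or.inl h
      rcases h0 with h | h <;>
        nlinarith [sq_nonneg (x 0), sq_nonneg (x 0 + x 1), mul_self_pos.mpr h]
  · intro k
    fin_cases k <;> norm_num [ip, exA, Fin.sum_univ_two]
  · intro t; rw [exA_range t, exA_range 0]
  · rintro t ht ⟨X, hX, hk⟩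
    have h2 := hk 1
    have h3 := hk 2
    simp [ip, exA, Fin.sum_univ_two] at h2 h3
    nlinarith
end
end
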